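/- For every positive integer k with 1 ≤ k ≤ n, among all k-node summary trees of a node-weighted rooted n-node tree T there exists one of maximum entropy in which, for every node v whose group node other_v exists, the set other_v is either a prefix or a near-prefix of the children of v sorted in nondecreasing order by subtree weight. Here a near-prefix is a set of the form {v₁,…,v_i} ∪ {v_j} with j ≥ i+2. -/

import Mathlib

/-- A rooted tree with real node weights and an ordered list of children. -/
inductive WTree where
  | node : ℝ → List WTree → WTree

mutual
/-- Total weight (size) of the subtree. -/
def WTree.wt : WTree → ℝ
  | .node w cs => w + WTree.wtList cs
def WTree.wtList : List WTree → ℝ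
  | [] => 0
  | t :: ts => WTree.wt t + WTree.wtList ts
end

mutual
/-- Number of nodes of the tree. -/
def WTree.size : WTree → ℕ
  | .node _ cs => 1 + WTree.sizeList cs
def WTree.sizeList : List WTree → ℕ
  | [] => 0
  | t :: ts => WTree.size t + WTree.sizeList ts
end

/-- A summary tree of a subtree: either the whole subtree collapsed to a single node,
or the root kept as a singleton together with, for each child, either a summary of the
child's subtree (`some s`) or membership of that child in the single group node
`other_v` (`none`). -/
inductive Summ where
  | leafAll : Summ
  | expand : List (Option Summ) → Summ

/-- `Valid t s` : `s` is a summary tree of the tree `t`. -/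
inductive Valid : WTree → Summ → Prop
  | all (t : WTree) : Valid t .leafAll
  | expand (w : ℝ) (cs : List WTree) (subs : List (Option Summ))
      (h : List.Forall₂ (fun c os => ∀ s, os = some s → Valid c s) cs subs) :
      Valid (.node w cs) (.expand subs)

mutual
/-- The number of nodes of a summary tree. -/
def Summ.count : Summ → ℕ
  | .leafAll => 1
  | .expand subs => 1 + (if subs.any Option.isNone then 1 else 0) + Summ.countList subs
def Summ.countList : List (Option Summ) → ℕ
  | [] => 0
  | none :: rest => Summ.countList rest
  | some s :: rest => Summ.count s + Summ.countList rest
end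

/-- Total weight of the children placed in the group node `other_v`. -/
def otherWeight : List WTree → List (Option Summ) → ℝ
  | _, [] => 0
  | [], _ :: _ => 0
  | c :: cs, os :: rest => (if os.isNone then WTree.wt c else 0) + otherWeight cs rest

mutual
/-- The list of node weights of a summary tree of `t`. -/
def parts : WTree → Summ → List ℝ
  | t, .leafAll => [WTree.wt t]
  | .node w cs, .expand subs =>
      w :: ((if subs.any Option.isNone then [otherWeight cs subs] else [])
        ++ partsList cs subs)
def partsList : List WTree → List (Option Summ) → List ℝ
  | _, [] => []
  | [], _ :: _ => []
  | _ :: cs, none :: rest => partsList cs rest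
  | c :: cs, some s :: rest => parts c s ++ partsList cs rest
end

/-- The entropy `-Σ (Wᵢ/W)·lg(Wᵢ/W)` of a list of node weights, `W` the total weight. -/
noncomputable def listEntropy (W : ℝ) (l : List ℝ) : ℝ :=
  -((l.map (fun x => x / W * Real.logb 2 (x / W))).sum)

/-- `Occurs s' s` : the summary node `s'` occurs somewhere within the summary tree `s`. -/
inductive Occurs : Summ → Summ → Prop
  | refl (s : Summ) : Occurs s s
  | step (s' s : Summ) (subs : List (Option Summ)) :
      some s ∈ subs → Occurs s' s → Occurs s' (.expand subs)

/-- `AllNodes P t` : the predicate `P` (of the weight and children list) holds at every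
node of `t`. -/
inductive WTree.AllNodes (P : ℝ → List WTree → Prop) : WTree → Prop
  | mk (w : ℝ) (cs : List WTree) : P w cs → (∀ c ∈ cs, WTree.AllNodes P c) →
      WTree.AllNodes P (.node w cs)

/-- The trues of the boolean list (marking children put into `other_v`, the children
being listed in nondecreasing order of size) form a prefix `{v₁,…,vᵢ}`, or a
near-prefix `{v₁,…,vᵢ} ∪ {v_j}` with `j ≥ i+2` (0-indexed: `{m : m < i} ∪ {j}`,
`j ≥ i+1`). -/
def NearPrefix (l : List Bool) : Prop :=
  (∃ i, ∀ m (h : m < l.length), (l[m] = true ↔ m < i)) ∨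
  (∃ i j, i + 1 ≤ j ∧ j < l.length ∧
    ∀ m (h : m < l.length), (l[m] = true ↔ (m < i ∨ m = j)))


open Real

noncomputable def phi (W x : ℝ) : ℝ := -(x / W * Real.logb 2 (x / W))

@[simp] lemma phi_zero (W : ℝ) : phi W 0 = 0 := by simp [phi]

lemma phi_identity {W x y : ℝ} (hW : 0 < W) (hx : 0 ≤ x) (hy : 0 ≤ y) (hS : 0 < x + y) :
    phi W x + phi W y - phi W (x + y)
      = (x + y) * Real.binEntropy (x / (x + y)) / (W * Real.log 2) := by
  rcases eq_or_lt_of_le hx with hx0 | hx0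
  · simp [← hx0, phi, Real.binEntropy_zero]
  rcases eq_or_lt_of_le hy with hy0 | hy0
  · have hxne : x ≠ 0 := by linarith
    have : x / (x + y) = 1 := by rw [← hy0]; field_simp; ring
    rw [this, Real.binEntropy_one, ← hy0]
    simp [phi]
  · have hl2 : Real.log 2 ≠ 0 := by positivity
    have hWne : W ≠ 0 := ne_of_gt hW
    have hSne : x + y ≠ 0 := ne_of_gt hS
    rw [Real.binEntropy]
    have h1 : (1 : ℝ) - x / (x + y) = y / (x + y) := by field_simp; ring
    rw [h1]
    simp only [phi, Real.logb, Real.log_div (ne_of_gt hx0) hWne,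
      Real.log_div (ne_of_gt hy0) hWne, Real.log_div hSne hWne,
      Real.log_inv, Real.log_div (ne_of_gt hx0) hSne, Real.log_div (ne_of_gt hy0) hSne]
    field_simp
    ring

lemma phi_subadd {W x y : ℝ} (hW : 0 < W) (hx : 0 ≤ x) (hy : 0 ≤ y) :
    phi W (x + y) ≤ phi W x + phi W y := by
  rcases eq_or_lt_of_le (by positivity : (0:ℝ) ≤ x + y) with hS | hS
  · have hx0 : x = 0 := by linarith
    have hy0 : y = 0 := by linarith
    simp [hx0, hy0]
  · have h := phi_identity hW hx hy hS
    have hb : 0 ≤ Real.binEntropy (x / (x + y)) :=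
      Real.binEntropy_nonneg (by positivity) (by rw [div_le_one hS]; linarith)
    nlinarith [Real.log_pos (by norm_num : (1:ℝ) < 2), mul_pos hW (Real.log_pos (by norm_num : (1:ℝ) < 2)),
      div_nonneg (mul_nonneg (le_of_lt hS) hb) (le_of_lt (mul_pos hW (Real.log_pos (by norm_num : (1:ℝ) < 2))))]

lemma phi_merge_le {W x y : ℝ} (hW : 0 < W) (hx : 0 ≤ x) (hy : 0 ≤ y) :
    phi W x + phi W y - phi W (x + y) ≤ (x + y) / W := by
  rcases eq_or_lt_of_le (by positivity : (0:ℝ) ≤ x + y) with hS | hS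
  · have hx0 : x = 0 := by linarith
    have hy0 : y = 0 := by linarith
    simp [hx0, hy0]
  · rw [phi_identity hW hx hy hS]
    have hb : Real.binEntropy (x / (x + y)) ≤ Real.log 2 := Real.binEntropy_le_log_two
    have hl2 : 0 < Real.log 2 := Real.log_pos (by norm_num)
    rw [div_le_div_iff₀ (by positivity) hW]
    calc (x + y) * Real.binEntropy (x / (x + y)) * W ≤ (x + y) * Real.log 2 * W := by
          apply mul_le_mul_of_nonneg_right _ (le_of_lt hW)
          exact mul_le_mul_of_nonneg_left hb (le_of_lt hS)
      _ = (x + y) * (W * Real.log 2) := by ring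

lemma binEntropy_ge_self_mul_log_two {p : ℝ} (hp : 0 ≤ p) (hp2 : p ≤ 1/2) :
    p * Real.log 2 ≤ Real.binEntropy p := by
  rw [Real.binEntropy]
  have h1 : 0 ≤ (1 - p) * Real.log (1 - p)⁻¹ := by
    rcases eq_or_lt_of_le hp2 with h | h
    · rw [h]; norm_num
      exact Real.log_nonneg (by norm_num)
    · apply mul_nonneg (by linarith)
      apply Real.log_nonneg
      rw [le_inv_comm₀ one_pos (by linarith)]
      linarith
  have h2 : p * Real.log 2 ≤ p * Real.log p⁻¹ := by
    rcases eq_or_lt_of_le hp with h | h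
    · simp [← h]
    · apply mul_le_mul_of_nonneg_left _ hp
      apply Real.log_le_log (by norm_num)
      rw [le_inv_comm₀ (by norm_num) h]; linarith
  linarith

lemma phi_split_ge {W u g : ℝ} (hW : 0 < W) (hu : 0 ≤ u) (hg : 2 * u ≤ g) :
    u / W ≤ phi W u + phi W (g - u) - phi W g := by
  have hgu : 0 ≤ g - u := by linarith
  have h : u + (g - u) = g := by ring
  rcases eq_or_lt_of_le (by linarith : (0:ℝ) ≤ g) with hg0 | hg0
  · have hu0 : u = 0 := by linarith
    simp [hu0, ← hg0]
  · have hid := phi_identity hW hu hgu (by linarith : 0 < u + (g - u))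
    rw [h] at hid
    rw [hid]
    have hl2 : 0 < Real.log 2 := Real.log_pos (by norm_num)
    have hb : (u / g) * Real.log 2 ≤ Real.binEntropy (u / g) :=
      binEntropy_ge_self_mul_log_two (by positivity) (by rw [div_le_iff₀ hg0]; linarith)
    rw [div_le_div_iff₀ hW (by positivity)]
    calc u * (W * Real.log 2) = (g * (u / g * Real.log 2)) * W := by field_simp
      _ ≤ (g * Real.binEntropy (u / g)) * W := by
          apply mul_le_mul_of_nonneg_right _ (le_of_lt hW)
          exact mul_le_mul_of_nonneg_left hb (le_of_lt hg0)

lemma phi_majorize {W a b g : ℝ} (hW : 0 < W) (ha : 0 ≤ a) (hab : a ≤ b) (hbg : b ≤ g) :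
    phi W a + phi W g ≤ phi W b + phi W (g + a - b) := by
  have hb : 0 ≤ b := le_trans ha hab
  have hg : 0 ≤ g := le_trans hb hbg
  have hgab : 0 ≤ g + a - b := by linarith
  rcases eq_or_lt_of_le (by linarith : (0:ℝ) ≤ a + g) with hS | hS
  · have ha0 : a = 0 := by linarith
    have hg0 : g = 0 := by linarith
    have hb0 : b = 0 := by linarith
    simp [ha0, hg0, hb0]
  · have hid1 := phi_identity hW ha hg hS
    have hid2 := phi_identity hW hb hgab (by linarith : 0 < b + (g + a - b))
    have he : b + (g + a - b) = a + g := by ring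
    rw [he] at hid2
    have hl2 : 0 < Real.log 2 := Real.log_pos (by norm_num)
    have key : Real.binEntropy (a / (a + g)) ≤ Real.binEntropy (b / (a + g)) := by
      have ha2 : a / (a + g) ≤ 1/2 := by rw [div_le_iff₀ hS]; linarith
      have ha0' : 0 ≤ a / (a + g) := by positivity
      rcases le_or_gt (b / (a + g)) (1/2) with hb2 | hb2
      · exact Real.binEntropy_strictMonoOn.monotoneOn
          (Set.mem_Icc.2 ⟨ha0', by norm_num at ha2 ⊢; linarith⟩)
          (Set.mem_Icc.2 ⟨by positivity, by norm_num at hb2 ⊢; linarith⟩)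
          (div_le_div_of_nonneg_right hab hS.le)
      · have hsym : Real.binEntropy (b / (a + g)) = Real.binEntropy (1 - b / (a + g)) :=
          (Real.binEntropy_one_sub _).symm
        rw [hsym]
        have h1b : 1 - b / (a + g) = (g + a - b) / (a + g) := by field_simp; ring
        rw [h1b]
        have hgab2 : (g + a - b) / (a + g) ≤ 1/2 := by
          rw [div_le_iff₀ hS]
          rw [lt_div_iff₀ hS] at hb2
          linarith
        apply Real.binEntropy_strictMonoOn.monotoneOn
          (Set.mem_Icc.2 ⟨ha0', by norm_num at ha2 ⊢; linarith⟩)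
          (Set.mem_Icc.2 ⟨by positivity, by norm_num at hgab2 ⊢; linarith⟩)
          (div_le_div_of_nonneg_right (by linarith) hS.le)
    have := div_le_div_of_nonneg_right
        (mul_le_mul_of_nonneg_left key (le_of_lt hS)) (mul_pos hW hl2).le
    linarith

/-! ### Basic lemmas -/

@[simp] lemma listEntropy_nil (W : ℝ) : listEntropy W [] = 0 := by simp [listEntropy]

lemma listEntropy_cons (W a : ℝ) (l : List ℝ) :
    listEntropy W (a :: l) = phi W a + listEntropy W l := by
  simp [listEntropy, phi]; ring

lemma listEntropy_append (W : ℝ) (l₁ l₂ : List ℝ) :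
    listEntropy W (l₁ ++ l₂) = listEntropy W l₁ + listEntropy W l₂ := by
  simp [listEntropy]; ring

@[simp] lemma listEntropy_singleton (W a : ℝ) : listEntropy W [a] = phi W a := by
  simp [listEntropy_cons]

lemma allNodes_node {P : ℝ → List WTree → Prop} {w : ℝ} {cs : List WTree} :
    WTree.AllNodes P (.node w cs) ↔ P w cs ∧ ∀ c ∈ cs, WTree.AllNodes P c := by
  constructor
  · rintro ⟨⟩; exact ⟨‹_›, ‹_›⟩
  · rintro ⟨h1, h2⟩; exact ⟨w, cs, h1, h2⟩

abbrev NN (t : WTree) : Prop := WTree.AllNodes (fun w _ => 0 ≤ w) t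

lemma wt_nonneg : ∀ t : WTree, NN t → 0 ≤ t.wt := by
  refine fun t => WTree.wt.induct (motive_1 := fun t => NN t → 0 ≤ t.wt)
      (motive_2 := fun cs => (∀ c ∈ cs, NN c) → 0 ≤ WTree.wtList cs) ?_ ?_ ?_ t
  · intro w cs ih h
    obtain ⟨h1, h2⟩ := allNodes_node.mp h
    simp only [WTree.wt]
    have := ih h2
    linarith
  · intro _; simp [WTree.wtList]
  · intro t ts ih1 ih2 h
    simp only [WTree.wtList]
    have := ih1 (h t (by simp))
    have := ih2 (fun c hc => h c (by simp [hc]))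
    linarith

lemma wtList_nonneg : ∀ cs : List WTree, (∀ c ∈ cs, NN c) → 0 ≤ WTree.wtList cs := by
  intro cs h
  induction cs with
  | nil => simp [WTree.wtList]
  | cons c cs ih =>
    simp only [WTree.wtList]
    have := wt_nonneg c (h c (by simp))
    have := ih (fun c hc => h c (by simp [hc]))
    linarith

lemma size_pos (t : WTree) : 1 ≤ t.size := by
  cases t with | node w cs => simp [WTree.size]

lemma count_pos (s : Summ) : 1 ≤ s.count := by
  cases s with
  | leafAll => simp [Summ.count]
  | expand subs => simp only [Summ.count]; split <;> omega

/-! ### Index-based representations -/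

def dT : WTree := .node 0 []

def ocount : Option Summ → ℕ
  | none => 0
  | some s => s.count

noncomputable def oent (W : ℝ) (c : WTree) : Option Summ → ℝ
  | none => 0
  | some s => listEntropy W (parts c s)

def oweight (c : WTree) (o : Option Summ) : ℝ := if o.isNone then c.wt else 0

lemma getD_set (l : List (Option Summ)) (i j : ℕ) (a : Option Summ) :
    (l.set i a).getD j none = if i = j ∧ i < l.length then a else l.getD j none := by
  rcases Decidable.em (i = j) with h1 | h1
  · subst h1
    rcases Decidable.em (i < l.length) with h2 | h2
    · rw [if_pos ⟨rfl, h2⟩]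
      simp only [List.getD_eq_getElem?_getD]
      simp [List.getElem?_set, h2]
    · rw [if_neg (by tauto), List.getD_eq_getElem?_getD, List.getD_eq_getElem?_getD,
        List.getElem?_eq_none (by simpa using h2),
        List.getElem?_eq_none (by omega)]
  · rw [if_neg (by tauto), List.getD_eq_getElem?_getD, List.getD_eq_getElem?_getD,
      List.getElem?_set_ne h1]

lemma sum_update {M : Type*} [AddCommMonoid M] (f f' : ℕ → M) (s : Finset ℕ) (i : ℕ)
    (hi : i ∈ s) (hoff : ∀ j ∈ s, j ≠ i → f' j = f j) :
    (∑ j ∈ s, f' j) + f i = (∑ j ∈ s, f j) + f' i := by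
  rw [← Finset.sum_erase_add s f' hi, ← Finset.sum_erase_add s f hi]
  rw [Finset.sum_congr rfl (fun j hj => hoff j (Finset.mem_of_mem_erase hj)
    (Finset.ne_of_mem_erase hj))]
  abel

lemma countList_eq (subs : List (Option Summ)) :
    Summ.countList subs = ∑ i ∈ Finset.range subs.length, ocount (subs.getD i none) := by
  induction subs with
  | nil => simp [Summ.countList]
  | cons o rest ih =>
    simp only [List.length_cons]
    rw [Finset.sum_range_succ']
    simp only [List.length_cons, List.getD_cons_succ, List.getD_cons_zero] at *
    cases o with
    | none => simp [Summ.countList, ih, ocount]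
    | some s => simp [Summ.countList, ih, ocount]; ring

lemma otherWeight_eq (cs : List WTree) (subs : List (Option Summ))
    (hlen : cs.length = subs.length) :
    otherWeight cs subs = ∑ i ∈ Finset.range subs.length,
      oweight (cs.getD i dT) (subs.getD i none) := by
  induction cs generalizing subs with
  | nil => cases subs with
    | nil => simp [otherWeight]
    | cons o rest => simp at hlen
  | cons c cs ih =>
    cases subs with
    | nil => simp at hlen
    | cons o rest =>
      simp only [List.length_cons]
      rw [Finset.sum_range_succ']
      simp only [List.length_cons, List.getD_cons_succ, List.getD_cons_zero] at *
      rw [otherWeight, ih rest (by omega)]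
      simp [oweight]
      ring

lemma entropy_partsList_eq (W : ℝ) (cs : List WTree) (subs : List (Option Summ))
    (hlen : cs.length = subs.length) :
    listEntropy W (partsList cs subs) = ∑ i ∈ Finset.range subs.length,
      oent W (cs.getD i dT) (subs.getD i none) := by
  induction cs generalizing subs with
  | nil => cases subs with
    | nil => simp [partsList]
    | cons o rest => simp at hlen
  | cons c cs ih =>
    cases subs with
    | nil => simp at hlen
    | cons o rest =>
      simp only [List.length_cons]
      rw [Finset.sum_range_succ']
      simp only [List.length_cons, List.getD_cons_succ, List.getD_cons_zero] at *
      cases o with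
      | none => rw [partsList, ih rest (by omega)]; simp [oent]
      | some s =>
        rw [partsList, listEntropy_append, ih rest (by omega)]
        simp [oent]
        ring

lemma sizeList_eq (cs : List WTree) :
    WTree.sizeList cs = ∑ i ∈ Finset.range cs.length, (cs.getD i dT).size := by
  induction cs with
  | nil => simp [WTree.sizeList]
  | cons c cs ih =>
    simp only [List.length_cons]
    rw [Finset.sum_range_succ']
    simp only [List.length_cons, List.getD_cons_succ, List.getD_cons_zero] at *
    rw [WTree.sizeList, ih]
    ring

lemma wtList_eq (cs : List WTree) :
    WTree.wtList cs = ∑ i ∈ Finset.range cs.length, (cs.getD i dT).wt := by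
  induction cs with
  | nil => simp [WTree.wtList]
  | cons c cs ih =>
    simp only [List.length_cons]
    rw [Finset.sum_range_succ']
    simp only [List.length_cons, List.getD_cons_succ, List.getD_cons_zero] at *
    rw [WTree.wtList, ih]
    ring

def mu (subs : List (Option Summ)) : ℕ :=
  ∑ i ∈ Finset.range subs.length, if (subs.getD i none).isNone then i else 0

lemma anyNone_iff (subs : List (Option Summ)) :
    subs.any Option.isNone = true ↔
      ∃ i, i < subs.length ∧ (subs.getD i none).isNone = true := by
  rw [List.any_eq_true]
  constructor
  · rintro ⟨o, ho, hno⟩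
    obtain ⟨i, hi, rfl⟩ := List.getElem_of_mem ho
    exact ⟨i, hi, by rw [List.getD_eq_getElem _ _ hi]; exact hno⟩
  · rintro ⟨i, hi, hno⟩
    refine ⟨subs[i], List.getElem_mem _, ?_⟩
    rwa [List.getD_eq_getElem _ _ hi] at hno

lemma valid_expand_iff {w : ℝ} {cs : List WTree} {subs : List (Option Summ)} :
    Valid (.node w cs) (.expand subs) ↔ cs.length = subs.length ∧
      ∀ i, i < subs.length → ∀ s, subs.getD i none = some s → Valid (cs.getD i dT) s := by
  constructor
  · intro h
    cases h with
    | expand _ _ _ h =>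
      rw [List.forall₂_iff_get] at h
      obtain ⟨hlen, hget⟩ := h
      refine ⟨hlen, fun i hi s hs => ?_⟩
      have h1 : i < cs.length := by omega
      have := hget i h1 hi
      rw [List.getD_eq_getElem _ _ h1]
      apply this
      rw [← hs, List.getD_eq_getElem _ _ hi]
      rfl
  · rintro ⟨hlen, h⟩
    refine Valid.expand w cs subs (List.forall₂_iff_get.2 ⟨hlen, fun i h1 h2 s hs => ?_⟩)
    have := h i h2 s (by rw [List.getD_eq_getElem _ _ h2]; exact hs)
    rwa [List.getD_eq_getElem _ _ h1] at this

/-! ### Structural facts -/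

lemma parts_leafAll (t : WTree) : parts t .leafAll = [t.wt] := by
  cases t; simp [parts]

lemma entropy_parts_expand (W w : ℝ) (cs : List WTree) (subs : List (Option Summ)) :
    listEntropy W (parts (.node w cs) (.expand subs)) =
      phi W w + (if subs.any Option.isNone then phi W (otherWeight cs subs) else 0)
        + listEntropy W (partsList cs subs) := by
  rw [parts, listEntropy_cons]
  split <;> simp [listEntropy_append, listEntropy_cons] <;> ring

lemma count_expand (subs : List (Option Summ)) :
    (Summ.expand subs).count
      = 1 + (if subs.any Option.isNone then 1 else 0) + Summ.countList subs := by
  rw [Summ.count]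

lemma allNodes_child {P : ℝ → List WTree → Prop} {w : ℝ} {cs : List WTree} {i : ℕ}
    (h : WTree.AllNodes P (.node w cs)) (hi : i < cs.length) :
    WTree.AllNodes P (cs.getD i dT) := by
  rw [List.getD_eq_getElem _ _ hi]
  exact (allNodes_node.mp h).2 _ (List.getElem_mem _)

lemma child_wt_sorted {w : ℝ} {cs : List WTree} {a b : ℕ}
    (h : WTree.AllNodes (fun _ cs => (cs.map WTree.wt).Pairwise (· ≤ ·)) (.node w cs))
    (hab : a ≤ b) (hb : b < cs.length) :
    (cs.getD a dT).wt ≤ (cs.getD b dT).wt := by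
  rcases eq_or_lt_of_le hab with rfl | hlt
  · exact le_refl _
  · have hs := (allNodes_node.mp h).1
    have := hs.rel_get_of_lt (a := ⟨a, by simp; omega⟩) (b := ⟨b, by simp; omega⟩)
      (by simp [Fin.lt_def]; exact hlt)
    simp only [List.get_eq_getElem, List.getElem_map] at this
    rwa [List.getD_eq_getElem _ _ (by omega), List.getD_eq_getElem _ _ hb]

lemma sizeOf_mem_subs {s' : Summ} {subs : List (Option Summ)} (h : some s' ∈ subs) :
    sizeOf s' < sizeOf (Summ.expand subs) := by
  have h2 := List.sizeOf_lt_of_mem h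
  simp only [Summ.expand.sizeOf_spec, Option.some.sizeOf_spec] at *
  omega

lemma getD_some_mem {subs : List (Option Summ)} {i : ℕ} {s : Summ}
    (hi : i < subs.length) (h : subs.getD i none = some s) : some s ∈ subs := by
  rw [List.getD_eq_getElem _ _ hi] at h
  rw [← h]
  exact List.getElem_mem _

lemma count_le_size : ∀ n (s : Summ) (t : WTree), sizeOf s ≤ n → Valid t s →
    s.count ≤ t.size := by
  intro n
  induction n with
  | zero => intro s t hs _; cases s <;> simp at hs
  | succ n ih =>
    intro s t hs hv
    cases s with
    | leafAll => simpa [Summ.count] using size_pos t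
    | expand subs =>
      cases t with
      | node w cs =>
        obtain ⟨hlen, hval⟩ := valid_expand_iff.mp hv
        rw [count_expand, WTree.size, countList_eq, sizeList_eq, ← hlen]
        have hptwise : ∀ j, j < cs.length → ocount (subs.getD j none) ≤ (cs.getD j dT).size := by
          intro j hj
          cases hsj : subs.getD j none with
          | none => simp [ocount]
          | some sj =>
            have hmem := getD_some_mem (by omega) hsj
            have := sizeOf_mem_subs hmem
            exact ih sj _ (by omega) (hval j (by omega) sj hsj)
        by_cases hany : subs.any Option.isNone
        · obtain ⟨i0, hi0, hi0n⟩ := (anyNone_iff subs).mp hany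
          rw [if_pos hany]
          have key : (∑ j ∈ Finset.range cs.length,
              (ocount (subs.getD j none) + if j = i0 then 1 else 0))
              ≤ ∑ j ∈ Finset.range cs.length, (cs.getD j dT).size := by
            apply Finset.sum_le_sum
            intro j hj
            rw [Finset.mem_range] at hj
            by_cases hji : j = i0
            · subst hji
              simp only [if_pos rfl]
              rw [Option.isNone_iff_eq_none] at hi0n
              rw [hi0n]
              have := size_pos (cs.getD j dT)
              simp only [ocount, if_true]
              omega
            · simp only [if_neg hji, add_zero]
              exact hptwise j hj
          rw [Finset.sum_add_distrib, Finset.sum_ite_eq' (Finset.range cs.length)] at key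
          simp only [Finset.mem_range] at key
          rw [if_pos (by omega)] at key
          omega
        · rw [if_neg hany]
          have := Finset.sum_le_sum (fun j hj =>
            hptwise j (Finset.mem_range.mp hj))
          omega

lemma valid_count_one_parts {t : WTree} {s : Summ} (hv : Valid t s) (hc : s.count = 1) :
    parts t s = [t.wt] := by
  cases s with
  | leafAll => exact parts_leafAll t
  | expand subs =>
    cases t with
    | node w cs =>
      have hsubs : subs = [] := by
        cases subs with
        | nil => rfl
        | cons o rest =>
          exfalso
          cases o with
          | none => simp [count_expand, Summ.countList] at hc; omega
          | some s0 =>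
            rw [count_expand] at hc
            have h1 : Summ.countList (some s0 :: rest) = s0.count + Summ.countList rest :=
              by rw [Summ.countList]
            have := count_pos s0
            omega
      subst hsubs
      obtain ⟨hlen, _⟩ := valid_expand_iff.mp hv
      have hcs : cs = [] := by cases cs <;> simp_all
      subst hcs
      simp [parts, partsList, WTree.wt, WTree.wtList]

lemma child_wt_le {w : ℝ} {cs : List WTree} {i : ℕ} (hnn : NN (.node w cs))
    (hi : i < cs.length) : (cs.getD i dT).wt ≤ (WTree.node w cs).wt := by
  obtain ⟨h1, h2⟩ := allNodes_node.mp hnn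
  rw [WTree.wt, wtList_eq]
  have hsingle : (cs.getD i dT).wt ≤ ∑ j ∈ Finset.range cs.length, (cs.getD j dT).wt := by
    apply Finset.single_le_sum (f := fun j => (cs.getD j dT).wt) _ (Finset.mem_range.2 hi)
    intro j hj
    exact wt_nonneg _ (allNodes_child hnn (Finset.mem_range.mp hj))
  linarith

lemma otherWeight_nonneg {w : ℝ} {cs : List WTree} {subs : List (Option Summ)}
    (hnn : NN (.node w cs)) (hlen : cs.length = subs.length) :
    0 ≤ otherWeight cs subs := by
  rw [otherWeight_eq cs subs hlen]
  apply Finset.sum_nonneg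
  intro j hj
  rw [Finset.mem_range] at hj
  unfold oweight
  split
  · exact wt_nonneg _ (allNodes_child hnn (by omega))
  · exact le_refl _

/-! ### Update lemmas -/

section SetLemmas

variable {cs : List WTree} {subs : List (Option Summ)} {i : ℕ} (o' : Option Summ)

lemma getD_set_self (hi : i < subs.length) : (subs.set i o').getD i none = o' := by
  rw [getD_set]
  simp [hi]

lemma getD_set_ne {j : ℕ} (hj : i ≠ j) :
    (subs.set i o').getD j none = subs.getD j none := by
  rw [getD_set, if_neg (by tauto)]

lemma set_countList (hi : i < subs.length) :
    Summ.countList (subs.set i o') + ocount (subs.getD i none)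
      = Summ.countList subs + ocount o' := by
  rw [countList_eq, countList_eq, List.length_set]
  have := sum_update (f := fun j => ocount (subs.getD j none))
    (f' := fun j => ocount ((subs.set i o').getD j none))
    (Finset.range subs.length) i (Finset.mem_range.2 hi)
    (fun j _ hj => by rw [getD_set_ne o' (fun h => hj h.symm)])
  rw [getD_set_self o' hi] at this
  exact this

lemma set_otherWeight (hlen : cs.length = subs.length) (hi : i < subs.length) :
    otherWeight cs (subs.set i o') + oweight (cs.getD i dT) (subs.getD i none)
      = otherWeight cs subs + oweight (cs.getD i dT) o' := by
  rw [otherWeight_eq cs _ (by rw [hlen, List.length_set]),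
    otherWeight_eq cs subs hlen, List.length_set]
  have := sum_update (f := fun j => oweight (cs.getD j dT) (subs.getD j none))
    (f' := fun j => oweight (cs.getD j dT) ((subs.set i o').getD j none))
    (Finset.range subs.length) i (Finset.mem_range.2 hi)
    (fun j _ hj => by rw [getD_set_ne o' (fun h => hj h.symm)])
  rw [getD_set_self o' hi] at this
  exact this

lemma set_entropy (W : ℝ) (hlen : cs.length = subs.length) (hi : i < subs.length) :
    listEntropy W (partsList cs (subs.set i o')) + oent W (cs.getD i dT) (subs.getD i none)
      = listEntropy W (partsList cs subs) + oent W (cs.getD i dT) o' := by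
  rw [entropy_partsList_eq W cs _ (by rw [hlen, List.length_set]),
    entropy_partsList_eq W cs subs hlen, List.length_set]
  have := sum_update (f := fun j => oent W (cs.getD j dT) (subs.getD j none))
    (f' := fun j => oent W (cs.getD j dT) ((subs.set i o').getD j none))
    (Finset.range subs.length) i (Finset.mem_range.2 hi)
    (fun j _ hj => by rw [getD_set_ne o' (fun h => hj h.symm)])
  rw [getD_set_self o' hi] at this
  exact this

lemma set_mu (hi : i < subs.length) :
    mu (subs.set i o') + (if (subs.getD i none).isNone then i else 0)
      = mu subs + (if o'.isNone then i else 0) := by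
  unfold mu
  rw [List.length_set]
  have := sum_update (f := fun j => if (subs.getD j none).isNone then j else 0)
    (f' := fun j => if ((subs.set i o').getD j none).isNone then j else 0)
    (Finset.range subs.length) i (Finset.mem_range.2 hi)
    (fun j _ hj => by rw [getD_set_ne o' (fun h => hj h.symm)])
  rw [getD_set_self o' hi] at this
  exact this

lemma set_valid {w : ℝ} (hv : Valid (.node w cs) (.expand subs))
    (ho' : ∀ s, o' = some s → Valid (cs.getD i dT) s) :
    Valid (.node w cs) (.expand (subs.set i o')) := by
  obtain ⟨hlen, hval⟩ := valid_expand_iff.mp hv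
  rw [valid_expand_iff]
  refine ⟨by rw [hlen, List.length_set], fun j hj s hs => ?_⟩
  rw [List.length_set] at hj
  by_cases hij : i = j
  · subst hij
    by_cases hi : i < subs.length
    · rw [getD_set_self o' hi] at hs
      exact ho' s hs
    · omega
  · rw [getD_set_ne o' hij] at hs
    exact hval j hj s hs

end SetLemmas

/-! ### More helpers -/

lemma anyNone_of_getD {subs : List (Option Summ)} {j : ℕ} (hj : j < subs.length)
    (h : subs.getD j none = none) : subs.any Option.isNone = true :=
  (anyNone_iff subs).2 ⟨j, hj, by rw [h]; rfl⟩

lemma not_anyNone_getD {subs : List (Option Summ)} (h : ¬ subs.any Option.isNone = true)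
    {j : ℕ} (hj : j < subs.length) : subs.getD j none ≠ none := by
  intro hc
  exact h (anyNone_of_getD hj hc)

lemma oweight_none {c : WTree} {o : Option Summ} (h : o = none) : oweight c o = c.wt := by
  subst h; simp [oweight]

lemma oweight_some {c : WTree} {o : Option Summ} (h : o ≠ none) : oweight c o = 0 := by
  unfold oweight
  rw [if_neg (by simpa [Option.isNone_iff_eq_none] using h)]

lemma oweight_nonneg {w : ℝ} {cs : List WTree} (hnn : NN (.node w cs)) {j : ℕ}
    (hj : j < cs.length) (o : Option Summ) : 0 ≤ oweight (cs.getD j dT) o := by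
  unfold oweight
  split
  · exact wt_nonneg _ (allNodes_child hnn hj)
  · exact le_refl _

lemma set_anyNone_eq {subs : List (Option Summ)} {i : ℕ} (o' : Option Summ)
    (hi : i < subs.length) (h : o'.isNone = (subs.getD i none).isNone) :
    (subs.set i o').any Option.isNone = subs.any Option.isNone := by
  rw [Bool.eq_iff_iff, anyNone_iff, anyNone_iff, List.length_set]
  constructor
  · rintro ⟨j, hj, hjn⟩
    by_cases hij : i = j
    · subst hij
      rw [getD_set_self o' hj] at hjn
      exact ⟨i, hj, by rw [← h]; exact hjn⟩
    · rw [getD_set_ne o' hij] at hjn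
      exact ⟨j, hj, hjn⟩
  · rintro ⟨j, hj, hjn⟩
    by_cases hij : i = j
    · subst hij
      exact ⟨i, hj, by rw [getD_set_self o' hj, h]; exact hjn⟩
    · exact ⟨j, hj, by rw [getD_set_ne o' hij]; exact hjn⟩

lemma noNone_otherWeight {cs : List WTree} {subs : List (Option Summ)}
    (hlen : cs.length = subs.length) (h : ¬ subs.any Option.isNone = true) :
    otherWeight cs subs = 0 := by
  rw [otherWeight_eq cs subs hlen]
  apply Finset.sum_eq_zero
  intro j hj
  exact oweight_some (not_anyNone_getD h (Finset.mem_range.mp hj))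

lemma otherWeight_single_eq {cs : List WTree} {subs : List (Option Summ)} {i0 : ℕ}
    (hlen : cs.length = subs.length) (hi0 : i0 < subs.length)
    (hn : subs.getD i0 none = none)
    (huniq : ∀ j, j < subs.length → j ≠ i0 → subs.getD j none ≠ none) :
    otherWeight cs subs = (cs.getD i0 dT).wt := by
  rw [otherWeight_eq cs subs hlen]
  rw [Finset.sum_eq_single i0
    (fun j hj hji => oweight_some (huniq j (Finset.mem_range.mp hj) hji))
    (fun hc => absurd (Finset.mem_range.2 hi0) hc)]
  exact oweight_none hn

lemma otherWeight_ge_single {w : ℝ} {cs : List WTree} {subs : List (Option Summ)} {i : ℕ}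
    (hnn : NN (.node w cs)) (hlen : cs.length = subs.length) (hi : i < subs.length)
    (hn : subs.getD i none = none) : (cs.getD i dT).wt ≤ otherWeight cs subs := by
  rw [otherWeight_eq cs subs hlen, ← oweight_none (c := cs.getD i dT) hn]
  exact Finset.single_le_sum (f := fun j => oweight (cs.getD j dT) (subs.getD j none))
    (fun j hj => oweight_nonneg hnn (by rw [hlen]; exact Finset.mem_range.mp hj) _)
    (Finset.mem_range.2 hi)

lemma otherWeight_ge_pair {w : ℝ} {cs : List WTree} {subs : List (Option Summ)} {i j : ℕ}
    (hnn : NN (.node w cs)) (hlen : cs.length = subs.length)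
    (hi : i < subs.length) (hj : j < subs.length) (hij : i ≠ j)
    (hni : subs.getD i none = none) (hnj : subs.getD j none = none) :
    (cs.getD i dT).wt + (cs.getD j dT).wt ≤ otherWeight cs subs := by
  rw [otherWeight_eq cs subs hlen]
  have h1 : ({i, j} : Finset ℕ) ⊆ Finset.range subs.length := by
    intro x hx
    rw [Finset.mem_insert, Finset.mem_singleton] at hx
    rcases hx with rfl | rfl <;> exact Finset.mem_range.2 (by omega)
  have h2 := Finset.sum_le_sum_of_subset_of_nonneg h1
    (f := fun j => oweight (cs.getD j dT) (subs.getD j none))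
    (fun x hx _ => oweight_nonneg hnn (by rw [hlen]; exact Finset.mem_range.mp hx) _)
  rw [Finset.sum_pair hij, oweight_none hni, oweight_none hnj] at h2
  exact h2

lemma otherWeight_add_some_le {w : ℝ} {cs : List WTree} {subs : List (Option Summ)} {i : ℕ}
    (hnn : NN (.node w cs)) (hlen : cs.length = subs.length) (hi : i < subs.length)
    (hs : subs.getD i none ≠ none) :
    otherWeight cs subs + (cs.getD i dT).wt ≤ (WTree.node w cs).wt := by
  obtain ⟨hw, hcs⟩ := allNodes_node.mp hnn
  rw [WTree.wt, wtList_eq, otherWeight_eq cs subs hlen, ← hlen]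
  have key : ∀ j ∈ Finset.range cs.length,
      oweight (cs.getD j dT) (subs.getD j none) + (if j = i then (cs.getD i dT).wt else 0)
        ≤ (cs.getD j dT).wt := by
    intro j hj
    rw [Finset.mem_range] at hj
    by_cases hji : j = i
    · subst hji
      rw [if_pos rfl, oweight_some hs]
      simp
    · rw [if_neg hji, add_zero]
      unfold oweight
      split
      · exact le_refl _
      · exact wt_nonneg _ (allNodes_child hnn hj)
  have h2 := Finset.sum_le_sum key
  rw [Finset.sum_add_distrib, Finset.sum_ite_eq' (Finset.range cs.length)] at h2
  rw [if_pos (by rw [Finset.mem_range, hlen]; exact hi)] at h2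
  linarith

lemma child_wt_pair_le {w : ℝ} {cs : List WTree} {i j : ℕ} (hnn : NN (.node w cs))
    (hi : i < cs.length) (hj : j < cs.length) (hij : i ≠ j) :
    (cs.getD i dT).wt + (cs.getD j dT).wt ≤ (WTree.node w cs).wt := by
  obtain ⟨hw, hcs⟩ := allNodes_node.mp hnn
  rw [WTree.wt, wtList_eq]
  have h1 : ({i, j} : Finset ℕ) ⊆ Finset.range cs.length := by
    intro x hx
    rw [Finset.mem_insert, Finset.mem_singleton] at hx
    rcases hx with rfl | rfl <;> exact Finset.mem_range.2 (by omega)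
  have h2 := Finset.sum_le_sum_of_subset_of_nonneg h1
    (f := fun j => (cs.getD j dT).wt)
    (fun x hx _ => wt_nonneg _ (allNodes_child hnn (Finset.mem_range.mp hx)))
  rw [Finset.sum_pair hij] at h2
  linarith

lemma getD_replicate_none (n j : ℕ) :
    (List.replicate n (none : Option Summ)).getD j none = none := by
  by_cases hj : j < n
  · rw [List.getD_eq_getElem _ _ (by simpa using hj)]
    simp
  · rw [List.getD_eq_default _ _ (by simpa using hj)]

lemma allNone_otherWeight {cs : List WTree} {subs : List (Option Summ)}
    (hlen : cs.length = subs.length)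
    (h : ∀ j, j < subs.length → subs.getD j none = none) :
    otherWeight cs subs = WTree.wtList cs := by
  rw [otherWeight_eq cs subs hlen, wtList_eq, ← hlen]
  apply Finset.sum_congr rfl
  intro j hj
  rw [Finset.mem_range] at hj
  exact oweight_none (h j (by omega))

lemma allNone_countList {subs : List (Option Summ)}
    (h : ∀ j, j < subs.length → subs.getD j none = none) : Summ.countList subs = 0 := by
  rw [countList_eq]
  apply Finset.sum_eq_zero
  intro j hj
  rw [h j (Finset.mem_range.mp hj)]
  rfl

lemma allNone_entropy {W : ℝ} {cs : List WTree} {subs : List (Option Summ)}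
    (hlen : cs.length = subs.length)
    (h : ∀ j, j < subs.length → subs.getD j none = none) :
    listEntropy W (partsList cs subs) = 0 := by
  rw [entropy_partsList_eq W cs subs hlen]
  apply Finset.sum_eq_zero
  intro j hj
  rw [h j (Finset.mem_range.mp hj)]
  rfl

lemma expandAllNone_valid (w : ℝ) (cs : List WTree) :
    Valid (.node w cs) (.expand (List.replicate cs.length none)) := by
  rw [valid_expand_iff]
  refine ⟨by simp, fun i hi s hs => ?_⟩
  rw [getD_replicate_none] at hs
  exact absurd hs (by simp)

lemma expandAllNone_count (cs : List WTree) (hne : 0 < cs.length) :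
    (Summ.expand (List.replicate cs.length none)).count = 2 := by
  rw [count_expand, allNone_countList (fun j _ => getD_replicate_none _ j),
    if_pos (anyNone_of_getD (by simpa using hne) (getD_replicate_none _ 0))]

lemma expandAllNone_entropy (W w : ℝ) (cs : List WTree) (hne : 0 < cs.length) :
    listEntropy W (parts (.node w cs) (.expand (List.replicate cs.length none)))
      = phi W w + phi W (WTree.wtList cs) := by
  rw [entropy_parts_expand,
    if_pos (anyNone_of_getD (by simpa using hne) (getD_replicate_none _ 0)),
    allNone_entropy (by simp) (fun j _ => getD_replicate_none _ j),
    allNone_otherWeight (by simp) (fun j _ => getD_replicate_none _ j)]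
  ring

/-! ### Refinement: adding one node -/

lemma length_pos_of_sizeList {cs : List WTree} (h : 0 < WTree.sizeList cs) :
    0 < cs.length := by
  cases cs with
  | nil => simp [WTree.sizeList] at h
  | cons c cs' => simp

lemma refine_step (W : ℝ) (hW : 0 < W) : ∀ n (s : Summ) (t : WTree), sizeOf s ≤ n →
    Valid t s → NN t → s.count < t.size →
    ∃ s', Valid t s' ∧ s'.count = s.count + 1 ∧
      listEntropy W (parts t s) ≤ listEntropy W (parts t s') := by
  intro n
  induction n with
  | zero => intro s t hs; cases s <;> simp at hs
  | succ n ih =>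
    intro s t hs hv hnn hc
    cases t with | node w cs =>
    obtain ⟨hw0, hcs0⟩ := allNodes_node.mp hnn
    cases s with
    | leafAll =>
      have hne : 0 < cs.length := by
        rcases cs with _ | ⟨c, cs'⟩
        · simp [Summ.count, WTree.size, WTree.sizeList] at hc
        · simp
      refine ⟨.expand (List.replicate cs.length none), expandAllNone_valid w cs, ?_, ?_⟩
      · rw [expandAllNone_count cs hne, Summ.count]
      · rw [expandAllNone_entropy W w cs hne, parts_leafAll, listEntropy_singleton,
          WTree.wt]
        exact phi_subadd hW hw0 (wtList_nonneg cs hcs0)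
    | expand subs =>
      obtain ⟨hlen, hval⟩ := valid_expand_iff.mp hv
      by_cases hex : ∃ i, i < subs.length ∧ ∃ si, subs.getD i none = some si ∧
          si.count < (cs.getD i dT).size
      · obtain ⟨i, hi, si, hsi, hci⟩ := hex
        have hszi := sizeOf_mem_subs (getD_some_mem hi hsi)
        have hvi := hval i hi si hsi
        have hnni := allNodes_child (i := i) hnn (by omega)
        obtain ⟨si', hv', hc', he'⟩ := ih si _ (by simp only [Summ.expand.sizeOf_spec] at hs hszi; omega) hvi hnni hci
        refine ⟨.expand (subs.set i (some si')), set_valid (cs := cs) _ hv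
          (fun s hs => by injection hs with h; exact h ▸ hv'), ?_, ?_⟩
        · rw [count_expand, count_expand,
            set_anyNone_eq (some si') hi (by rw [hsi]; rfl)]
          have hcl := set_countList (subs := subs) (i := i) (some si') hi
          rw [hsi] at hcl
          simp only [ocount] at hcl
          omega
        · rw [entropy_parts_expand, entropy_parts_expand,
            set_anyNone_eq (some si') hi (by rw [hsi]; rfl)]
          have how := set_otherWeight (cs := cs) (subs := subs) (i := i) (some si') hlen hi
          rw [oweight_some (by rw [hsi]; simp), oweight_some (by simp)] at how
          have hent := set_entropy (cs := cs) (subs := subs) (i := i) (some si') W hlen hi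
          rw [hsi] at hent
          simp only [oent] at hent
          have how' : otherWeight cs (subs.set i (some si')) = otherWeight cs subs := by
            linarith
          rw [how']
          split <;> linarith
      · push_neg at hex
        have hall : ∀ i, i < subs.length → ∀ si, subs.getD i none = some si →
            si.count = (cs.getD i dT).size := by
          intro i hi si hsi
          have h1 := count_le_size (sizeOf si) si _ (le_refl _) (hval i hi si hsi)
          have h2 := hex i hi si hsi
          omega
        by_cases hany : subs.any Option.isNone
        · obtain ⟨i0, hi0, hi0n⟩ := (anyNone_iff subs).mp hany
          rw [Option.isNone_iff_eq_none] at hi0n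
          by_cases htwo : ∃ j, j < subs.length ∧ j ≠ i0 ∧ subs.getD j none = none
          · obtain ⟨j, hj, hji, hjn⟩ := htwo
            have hany' : (subs.set i0 (some .leafAll)).any Option.isNone = true := by
              apply anyNone_of_getD (j := j) (by rw [List.length_set]; omega)
              rw [getD_set_ne _ (fun h => hji h.symm)]
              exact hjn
            refine ⟨.expand (subs.set i0 (some .leafAll)),
              set_valid (cs := cs) _ hv
                (fun s hs => by injection hs with h; exact h ▸ Valid.all _), ?_, ?_⟩
            · rw [count_expand, count_expand, if_pos hany', if_pos hany]
              have hcl := set_countList (subs := subs) (i := i0) (some .leafAll) hi0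
              rw [hi0n] at hcl
              simp only [ocount, Summ.count] at hcl
              omega
            · rw [entropy_parts_expand, entropy_parts_expand, if_pos hany', if_pos hany]
              have how := set_otherWeight (cs := cs) (subs := subs) (i := i0)
                (some .leafAll) hlen hi0
              rw [oweight_none hi0n, oweight_some (by simp)] at how
              have hent := set_entropy (cs := cs) (subs := subs) (i := i0)
                (some .leafAll) W hlen hi0
              rw [hi0n] at hent
              simp only [oent, parts_leafAll, listEntropy_singleton] at hent
              have hnn' : 0 ≤ otherWeight cs (subs.set i0 (some .leafAll)) :=
                otherWeight_nonneg hnn (by rw [List.length_set]; omega)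
              have hwti0 : 0 ≤ (cs.getD i0 dT).wt :=
                wt_nonneg _ (allNodes_child (i := i0) hnn (by omega))
              have hsplit := phi_subadd hW hnn' hwti0
              have hgeq : otherWeight cs (subs.set i0 (some .leafAll)) + (cs.getD i0 dT).wt
                  = otherWeight cs subs := by linarith
              rw [← hgeq]
              linarith
          · push_neg at htwo
            have huniq : ∀ j, j < subs.length → j ≠ i0 → subs.getD j none ≠ none :=
              fun j h1 h2 => htwo j h1 h2
            have how0 : otherWeight cs subs = (cs.getD i0 dT).wt :=
              otherWeight_single_eq hlen hi0 hi0n huniq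
            have hsz : 2 ≤ (cs.getD i0 dT).size := by
              by_contra hsz
              have hsz1 : (cs.getD i0 dT).size = 1 := by
                have := size_pos (cs.getD i0 dT); omega
              have e1 : (∑ j ∈ Finset.range subs.length,
                  (ocount (subs.getD j none) + if j = i0 then 1 else 0))
                  = ∑ j ∈ Finset.range subs.length, (cs.getD j dT).size := by
                apply Finset.sum_congr rfl
                intro j hjr
                rw [Finset.mem_range] at hjr
                by_cases hji : j = i0
                · subst hji
                  rw [hi0n, if_pos rfl, hsz1]
                  simp [ocount]
                · rw [if_neg hji, add_zero]
                  cases hsj : subs.getD j none with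
                  | none => exact absurd hsj (huniq j hjr hji)
                  | some sj => simp only [ocount]; rw [hall j hjr sj hsj]
              rw [Finset.sum_add_distrib, Finset.sum_ite_eq' (Finset.range subs.length),
                if_pos (Finset.mem_range.2 hi0)] at e1
              have e2 : Summ.countList subs + 1 = WTree.sizeList cs := by
                rw [countList_eq, sizeList_eq, hlen]
                exact e1
              rw [count_expand, if_pos hany, WTree.size] at hc
              omega
            cases hcc : cs.getD i0 dT with | node w0 cs0 =>
            have hnn0 : NN (WTree.node w0 cs0) := hcc ▸ allNodes_child (i := i0) hnn (by omega)
            have hne0 : 0 < cs0.length := by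
              apply length_pos_of_sizeList
              rw [hcc, WTree.size] at hsz
              omega
            set snew : Summ := .expand (List.replicate cs0.length none) with hsnew
            have hvnew : Valid (cs.getD i0 dT) snew := hcc ▸ expandAllNone_valid w0 cs0
            have hanyF : ¬ (subs.set i0 (some snew)).any Option.isNone = true := by
              intro hcon
              obtain ⟨j, hjl, hjn⟩ := (anyNone_iff _).mp hcon
              rw [List.length_set] at hjl
              rw [Option.isNone_iff_eq_none] at hjn
              by_cases hji : i0 = j
              · subst hji
                rw [getD_set_self _ hi0] at hjn
                exact absurd hjn (by simp)
              · rw [getD_set_ne _ hji] at hjn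
                exact huniq j hjl (fun h => hji h.symm) hjn
            refine ⟨.expand (subs.set i0 (some snew)),
              set_valid (cs := cs) _ hv
                (fun s hs => by injection hs with h; exact h ▸ hvnew), ?_, ?_⟩
            · rw [count_expand, count_expand, if_pos hany, if_neg hanyF]
              have hcl := set_countList (subs := subs) (i := i0) (some snew) hi0
              rw [hi0n] at hcl
              simp only [ocount] at hcl
              have hc2 : snew.count = 2 := hsnew ▸ expandAllNone_count cs0 hne0
              omega
            · rw [entropy_parts_expand, entropy_parts_expand, if_pos hany, if_neg hanyF]
              have how := set_otherWeight (cs := cs) (subs := subs) (i := i0)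
                (some snew) hlen hi0
              rw [oweight_none hi0n, oweight_some (by simp)] at how
              have hent := set_entropy (cs := cs) (subs := subs) (i := i0)
                (some snew) W hlen hi0
              rw [hi0n] at hent
              simp only [oent] at hent
              have hentnew : listEntropy W (parts (cs.getD i0 dT) snew)
                  = phi W w0 + phi W (WTree.wtList cs0) := by
                rw [hcc, hsnew]
                exact expandAllNone_entropy W w0 cs0 hne0
              have hw00 : 0 ≤ w0 := (allNodes_node.mp hnn0).1
              have hwl0 : 0 ≤ WTree.wtList cs0 :=
                wtList_nonneg cs0 (allNodes_node.mp hnn0).2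
              have hsub := phi_subadd hW hw00 hwl0
              have hwt0 : (cs.getD i0 dT).wt = w0 + WTree.wtList cs0 := by
                rw [hcc, WTree.wt]
              rw [how0, hwt0]
              linarith
        · exfalso
          have e2 : Summ.countList subs = WTree.sizeList cs := by
            rw [sizeList_eq, countList_eq, hlen]
            apply Finset.sum_congr rfl
            intro j hj
            rw [Finset.mem_range] at hj
            cases hsj : subs.getD j none with
            | none => exact absurd hsj (not_anyNone_getD hany hj)
            | some sj => simp only [ocount]; rw [hall j hj sj hsj]
          rw [count_expand, if_neg hany, WTree.size] at hc
          omega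

/-! ### Coarsening: removing one node, losing at most wt t / W entropy -/

lemma coarsen_step (W : ℝ) (hW : 0 < W) : ∀ n (s : Summ) (t : WTree), sizeOf s ≤ n →
    Valid t s → NN t → 2 ≤ s.count →
    ∃ s', Valid t s' ∧ s'.count + 1 = s.count ∧
      listEntropy W (parts t s) - t.wt / W ≤ listEntropy W (parts t s') := by
  intro n
  induction n with
  | zero => intro s t hs; cases s <;> simp at hs
  | succ n ih =>
    intro s t hs hv hnn hc
    cases t with | node w cs =>
    obtain ⟨hw0, hcs0⟩ := allNodes_node.mp hnn
    have hwt0 : 0 ≤ (WTree.node w cs).wt :=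
      wt_nonneg _ hnn
    cases s with
    | leafAll => simp [Summ.count] at hc
    | expand subs =>
      obtain ⟨hlen, hval⟩ := valid_expand_iff.mp hv
      by_cases hex : ∃ i, i < subs.length ∧ ∃ si, subs.getD i none = some si ∧
          2 ≤ si.count
      · obtain ⟨i, hi, si, hsi, hci⟩ := hex
        have hszi := sizeOf_mem_subs (getD_some_mem hi hsi)
        have hvi := hval i hi si hsi
        have hnni := allNodes_child (i := i) hnn (by omega)
        obtain ⟨si', hv', hc', he'⟩ := ih si _
          (by simp only [Summ.expand.sizeOf_spec] at hs hszi; omega) hvi hnni hci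
        refine ⟨.expand (subs.set i (some si')), set_valid (cs := cs) _ hv
          (fun s hs => by injection hs with h; exact h ▸ hv'), ?_, ?_⟩
        · rw [count_expand, count_expand,
            set_anyNone_eq (some si') hi (by rw [hsi]; rfl)]
          have hcl := set_countList (subs := subs) (i := i) (some si') hi
          rw [hsi] at hcl
          simp only [ocount] at hcl
          omega
        · rw [entropy_parts_expand, entropy_parts_expand,
            set_anyNone_eq (some si') hi (by rw [hsi]; rfl)]
          have how := set_otherWeight (cs := cs) (subs := subs) (i := i) (some si') hlen hi
          rw [oweight_some (by rw [hsi]; simp), oweight_some (by simp)] at how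
          have hent := set_entropy (cs := cs) (subs := subs) (i := i) (some si') W hlen hi
          rw [hsi] at hent
          simp only [oent] at hent
          have how' : otherWeight cs (subs.set i (some si')) = otherWeight cs subs := by
            linarith
          rw [how']
          have hwle : (cs.getD i dT).wt / W ≤ (WTree.node w cs).wt / W :=
            div_le_div_of_nonneg_right (child_wt_le hnn (by omega)) hW.le
          split <;> linarith
      · push_neg at hex
        have hall : ∀ i, i < subs.length → ∀ si, subs.getD i none = some si →
            si.count = 1 := by
          intro i hi si hsi
          have h1 := count_pos si
          have h2 := hex i hi si hsi
          omega
        have hoent : ∀ i, i < subs.length → ∀ si, subs.getD i none = some si →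
            listEntropy W (parts (cs.getD i dT) si) = phi W (cs.getD i dT).wt := by
          intro i hi si hsi
          rw [valid_count_one_parts (hval i hi si hsi) (hall i hi si hsi),
            listEntropy_singleton]
        by_cases hany : subs.any Option.isNone
        · by_cases hsome : ∃ j, j < subs.length ∧ subs.getD j none ≠ none
          · obtain ⟨j, hj, hjs⟩ := hsome
            obtain ⟨sj, hsj⟩ : ∃ sj, subs.getD j none = some sj := by
              cases hx : subs.getD j none with
              | none => exact absurd hx hjs
              | some sj => exact ⟨sj, rfl⟩
            obtain ⟨i0, hi0, hi0n⟩ := (anyNone_iff subs).mp hany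
            rw [Option.isNone_iff_eq_none] at hi0n
            have hij : i0 ≠ j := by
              intro h
              rw [h, hsj] at hi0n
              exact absurd hi0n (by simp)
            have hany' : (subs.set j none).any Option.isNone = true := by
              apply anyNone_of_getD (j := i0) (by rw [List.length_set]; omega)
              rw [getD_set_ne _ (fun h => hij h.symm)]
              exact hi0n
            refine ⟨.expand (subs.set j none), set_valid (cs := cs) _ hv
              (fun s hs => by simp at hs), ?_, ?_⟩
            · rw [count_expand, count_expand, if_pos hany', if_pos hany]
              have hcl := set_countList (subs := subs) (i := j) none hj
              rw [hsj] at hcl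
              simp only [ocount] at hcl
              rw [hall j hj sj hsj] at hcl
              omega
            · rw [entropy_parts_expand, entropy_parts_expand, if_pos hany', if_pos hany]
              have how := set_otherWeight (cs := cs) (subs := subs) (i := j) none hlen hj
              rw [oweight_some (by rw [hsj]; simp), oweight_none rfl] at how
              have hent := set_entropy (cs := cs) (subs := subs) (i := j) none W hlen hj
              rw [hsj] at hent
              simp only [oent] at hent
              rw [hoent j hj sj hsj] at hent
              have hwj : 0 ≤ (cs.getD j dT).wt :=
                wt_nonneg _ (allNodes_child (i := j) hnn (by omega))
              have hwo : 0 ≤ otherWeight cs subs := otherWeight_nonneg hnn hlen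
              have hmerge := phi_merge_le hW hwj hwo
              have hbound := otherWeight_add_some_le hnn hlen hj hjs
              have hdiv : ((cs.getD j dT).wt + otherWeight cs subs) / W
                  ≤ (WTree.node w cs).wt / W :=
                div_le_div_of_nonneg_right (by linarith) hW.le
              have hgeq : otherWeight cs (subs.set j none)
                  = (cs.getD j dT).wt + otherWeight cs subs := by linarith
              rw [hgeq]
              linarith
          · push_neg at hsome
            refine ⟨.leafAll, Valid.all _, ?_, ?_⟩
            · rw [count_expand, if_pos hany, allNone_countList hsome, Summ.count]
            · rw [entropy_parts_expand, if_pos hany, allNone_entropy hlen hsome,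
                allNone_otherWeight hlen hsome, parts_leafAll, listEntropy_singleton,
                WTree.wt]
              have hwl : 0 ≤ WTree.wtList cs := wtList_nonneg cs hcs0
              have hmerge := phi_merge_le hW hw0 hwl
              have : (w + WTree.wtList cs) / W = (WTree.node w cs).wt / W := by
                rw [WTree.wt]
              linarith
        · -- no group node: all children some, each count 1
          have hcnt : Summ.countList subs = subs.length := by
            rw [countList_eq]
            rw [Finset.sum_congr rfl (g := fun _ => 1) ?_]
            · simp
            · intro j hj
              rw [Finset.mem_range] at hj
              cases hsj : subs.getD j none with
              | none => exact absurd hsj (not_anyNone_getD hany hj)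
              | some sj => simp only [ocount]; rw [hall j hj sj hsj]
          have hlen1 : 1 ≤ subs.length := by
            rw [count_expand, if_neg hany, hcnt] at hc
            omega
          rcases eq_or_lt_of_le hlen1 with hlen1' | hlen2
          · -- exactly one child
            obtain ⟨s0, hs0⟩ : ∃ s0, subs.getD 0 none = some s0 := by
              cases hx : subs.getD 0 none with
              | none => exact absurd hx (not_anyNone_getD hany (by omega))
              | some s0 => exact ⟨s0, rfl⟩
            refine ⟨.leafAll, Valid.all _, ?_, ?_⟩
            · rw [count_expand, if_neg hany, hcnt, ← hlen1', Summ.count]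
            · rw [entropy_parts_expand, if_neg hany, parts_leafAll, listEntropy_singleton]
              have hE : listEntropy W (partsList cs subs) = phi W (cs.getD 0 dT).wt := by
                rw [entropy_partsList_eq W cs subs hlen, ← hlen1']
                rw [Finset.sum_range_one, hs0]
                simp only [oent]
                exact hoent 0 (by omega) s0 hs0
              have hwl : WTree.wtList cs = (cs.getD 0 dT).wt := by
                rw [wtList_eq, hlen, ← hlen1', Finset.sum_range_one]
              have hwc : 0 ≤ (cs.getD 0 dT).wt :=
                wt_nonneg _ (allNodes_child (i := 0) hnn (by omega))
              have hmerge := phi_merge_le hW hw0 hwc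
              have heq : (WTree.node w cs).wt = w + (cs.getD 0 dT).wt := by
                rw [WTree.wt, hwl]
              rw [heq, hE]
              linarith
          · -- at least two children: merge children 0 and 1 into a new group
            obtain ⟨s0, hs0⟩ : ∃ s0, subs.getD 0 none = some s0 := by
              cases hx : subs.getD 0 none with
              | none => exact absurd hx (not_anyNone_getD hany (by omega))
              | some s0 => exact ⟨s0, rfl⟩
            obtain ⟨s1, hs1⟩ : ∃ s1, subs.getD 1 none = some s1 := by
              cases hx : subs.getD 1 none with
              | none => exact absurd hx (not_anyNone_getD hany (by omega))
              | some s1 => exact ⟨s1, rfl⟩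
            set subs1 : List (Option Summ) := subs.set 0 none with hsubs1
            have hlen1e : subs1.length = subs.length := by rw [hsubs1, List.length_set]
            have hg1 : subs1.getD 1 none = some s1 := by
              rw [hsubs1, getD_set_ne _ (by omega)]
              exact hs1
            have hg0 : subs1.getD 0 none = none := by
              rw [hsubs1, getD_set_self _ (by omega)]
            have hv1 : Valid (.node w cs) (.expand subs1) :=
              set_valid (cs := cs) _ hv (fun s hs => by simp at hs)
            refine ⟨.expand (subs1.set 1 none), set_valid (cs := cs) _ hv1
              (fun s hs => by simp at hs), ?_, ?_⟩
            · have hany2 : (subs1.set 1 none).any Option.isNone = true := by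
                apply anyNone_of_getD (j := 0) (by rw [List.length_set]; omega)
                rw [getD_set_ne _ (by omega)]
                exact hg0
              rw [count_expand, count_expand, if_pos hany2, if_neg hany]
              have hcl1 := set_countList (subs := subs) (i := 0) none (by omega)
              rw [hs0] at hcl1
              simp only [ocount] at hcl1
              rw [hall 0 (by omega) s0 hs0] at hcl1
              have hcl2 := set_countList (subs := subs1) (i := 1) none (by omega)
              rw [hg1] at hcl2
              simp only [ocount] at hcl2
              rw [hall 1 (by omega) s1 hs1] at hcl2
              rw [← hsubs1] at hcl1
              omega
            · have hany2 : (subs1.set 1 none).any Option.isNone = true := by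
                apply anyNone_of_getD (j := 0) (by rw [List.length_set]; omega)
                rw [getD_set_ne _ (by omega)]
                exact hg0
              rw [entropy_parts_expand, entropy_parts_expand, if_pos hany2, if_neg hany]
              have hlen' : cs.length = subs1.length := by rw [hlen1e, hlen]
              have how1 := set_otherWeight (cs := cs) (subs := subs) (i := 0) none hlen (by omega)
              rw [oweight_some (by rw [hs0]; simp), oweight_none rfl, ← hsubs1] at how1
              have how2 := set_otherWeight (cs := cs) (subs := subs1) (i := 1) none hlen' (by omega)
              rw [oweight_some (by rw [hg1]; simp), oweight_none rfl] at how2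
              have hent1 := set_entropy (cs := cs) (subs := subs) (i := 0) none W hlen (by omega)
              rw [hs0, ← hsubs1] at hent1
              simp only [oent] at hent1
              rw [hoent 0 (by omega) s0 hs0] at hent1
              have hent2 := set_entropy (cs := cs) (subs := subs1) (i := 1) none W hlen' (by omega)
              rw [hg1] at hent2
              simp only [oent] at hent2
              rw [hoent 1 (by omega) s1 hs1] at hent2
              have hw0' : 0 ≤ (cs.getD 0 dT).wt :=
                wt_nonneg _ (allNodes_child (i := 0) hnn (by omega))
              have hw1' : 0 ≤ (cs.getD 1 dT).wt :=
                wt_nonneg _ (allNodes_child (i := 1) hnn (by omega))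
              have hmerge := phi_merge_le hW hw0' hw1'
              have hpair := child_wt_pair_le (i := 0) (j := 1) hnn (by omega) (by omega)
                (by omega)
              have hdiv : ((cs.getD 0 dT).wt + (cs.getD 1 dT).wt) / W
                  ≤ (WTree.node w cs).wt / W :=
                div_le_div_of_nonneg_right (by linarith) hW.le
              have how0 : otherWeight cs subs = 0 := noNone_otherWeight hlen hany
              have hgeq : otherWeight cs (subs1.set 1 none)
                  = (cs.getD 0 dT).wt + (cs.getD 1 dT).wt := by linarith
              rw [hgeq]
              linarith

/-! ### Existence of k-node summaries, enumeration, argmax -/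

lemma exists_summary (t : WTree) (hnn : NN t) :
    ∀ k, 1 ≤ k → k ≤ t.size → ∃ s, Valid t s ∧ s.count = k := by
  intro k
  induction k with
  | zero => omega
  | succ k ihk =>
    intro _ hk1
    rcases Nat.eq_or_lt_of_le (by omega : 1 ≤ k + 1) with h1 | h2
    · exact ⟨.leafAll, Valid.all t, by rw [Summ.count]; omega⟩
    · obtain ⟨s, hv, hcnt⟩ := ihk (by omega) (by omega)
      obtain ⟨s', hv', hc', _⟩ := refine_step 1 one_pos (sizeOf s) s t (le_refl _) hv hnn
        (by omega)
      exact ⟨s', hv', by omega⟩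

mutual
def allSumms : WTree → List Summ
  | .node _ cs => .leafAll :: (allSummsList cs).map Summ.expand
def allSummsList : List WTree → List (List (Option Summ))
  | [] => [[]]
  | c :: cs =>
      (allSummsList cs).flatMap (fun rest =>
        (none :: rest) :: (allSumms c).map (fun s => some s :: rest))
end

lemma mem_allSummsList : ∀ {cs : List WTree} {subs : List (Option Summ)},
    List.Forall₂ (fun c os => ∀ s, os = some s → s ∈ allSumms c) cs subs →
    subs ∈ allSummsList cs := by
  intro cs subs h
  induction h with
  | nil => simp [allSummsList]
  | cons hR hF ih =>
    rename_i c os cs' subs'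
    rw [allSummsList, List.mem_flatMap]
    refine ⟨subs', ih, ?_⟩
    cases os with
    | none => simp
    | some s =>
      simp only [List.mem_cons, List.mem_map]
      exact Or.inr ⟨s, hR s rfl, rfl⟩

lemma valid_mem_allSumms : ∀ n (s : Summ) (t : WTree), sizeOf s ≤ n → Valid t s →
    s ∈ allSumms t := by
  intro n
  induction n with
  | zero => intro s t hs; cases s <;> simp at hs
  | succ n ih =>
    intro s t hs hv
    cases t with | node w cs =>
    cases s with
    | leafAll => rw [allSumms]; simp
    | expand subs =>
      rw [allSumms]
      simp only [List.mem_cons, List.mem_map]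
      refine Or.inr ⟨subs, ?_, rfl⟩
      apply mem_allSummsList
      obtain ⟨hlen, hval⟩ := valid_expand_iff.mp hv
      rw [List.forall₂_iff_get]
      refine ⟨hlen, fun i h1 h2 s' hs' => ?_⟩
      have hgd : subs.getD i none = some s' := by
        rw [List.getD_eq_getElem _ _ h2]
        exact hs'
      have hsz := sizeOf_mem_subs (getD_some_mem h2 hgd)
      have hvs := hval i h2 s' hgd
      rw [List.getD_eq_getElem _ _ h1] at hvs
      exact ih s' _ (by simp only [Summ.expand.sizeOf_spec] at hs hsz; omega) hvs

lemma exists_argmax_pred {α : Type*} (f : α → ℝ) (P : α → Prop) :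
    ∀ (l : List α), (∃ a, a ∈ l ∧ P a) →
      ∃ a, a ∈ l ∧ P a ∧ ∀ b ∈ l, P b → f b ≤ f a := by
  intro l
  induction l with
  | nil => rintro ⟨a, ha, _⟩; simp at ha
  | cons x l ihl =>
    rintro ⟨a, ha, hPa⟩
    by_cases hex : ∃ b, b ∈ l ∧ P b
    · obtain ⟨m, hm, hPm, hmax⟩ := ihl hex
      by_cases hPx : P x ∧ f m ≤ f x
      · refine ⟨x, by simp, hPx.1, fun b hb hPb => ?_⟩
        rcases List.mem_cons.mp hb with rfl | hb'
        · exact le_refl _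
        · exact le_trans (hmax b hb' hPb) hPx.2
      · refine ⟨m, by simp [hm], hPm, fun b hb hPb => ?_⟩
        rcases List.mem_cons.mp hb with rfl | hb'
        · by_cases hPx' : P b
          · rcases le_or_gt (f b) (f m) with h | h
            · exact h
            · exact absurd ⟨hPx', h.le⟩ hPx
          · exact absurd hPb hPx'
        · exact hmax b hb' hPb
    · have hax : a = x := by
        rcases List.mem_cons.mp ha with rfl | ha'
        · rfl
        · exact absurd ⟨a, ha', hPa⟩ hex
      subst hax
      refine ⟨a, by simp, hPa, fun b hb hPb => ?_⟩
      rcases List.mem_cons.mp hb with rfl | hb'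
      · exact le_refl _
      · exact absurd ⟨b, hb', hPb⟩ hex

lemma exists_maximizer (W : ℝ) (t : WTree) (hnn : NN t) (k : ℕ) (hk1 : 1 ≤ k)
    (hkn : k ≤ t.size) :
    ∃ s, Valid t s ∧ s.count = k ∧ ∀ s', Valid t s' → s'.count = k →
      listEntropy W (parts t s') ≤ listEntropy W (parts t s) := by
  obtain ⟨s0, hv0, hc0⟩ := exists_summary t hnn k hk1 hkn
  obtain ⟨s, hmem, ⟨hv, hc⟩, hmax⟩ := exists_argmax_pred
    (fun s => listEntropy W (parts t s)) (fun s => Valid t s ∧ s.count = k)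
    (allSumms t) ⟨s0, valid_mem_allSumms (sizeOf s0) s0 t (le_refl _) hv0, hv0, hc0⟩
  exact ⟨s, hv, hc, fun s' hv' hc' =>
    hmax s' (valid_mem_allSumms (sizeOf s') s' t (le_refl _) hv') ⟨hv', hc'⟩⟩

lemma child_size_le {cs : List WTree} {i : ℕ} (hi : i < cs.length) :
    (cs.getD i dT).size ≤ WTree.sizeList cs := by
  rw [sizeList_eq]
  exact Finset.single_le_sum (f := fun j => (cs.getD j dT).size)
    (fun j _ => Nat.zero_le _) (Finset.mem_range.2 hi)

/-! ### Near-prefix machinery -/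

def NPsumm (s : Summ) : Prop :=
  ∀ subs : List (Option Summ), Occurs (.expand subs) s →
    subs.any Option.isNone → NearPrefix (subs.map Option.isNone)

lemma occurs_leafAll {s' : Summ} (h : Occurs s' .leafAll) : s' = .leafAll := by
  cases h; rfl

lemma NPsumm_leafAll : NPsumm .leafAll := by
  intro subs h
  exact absurd (occurs_leafAll h) (by simp)

lemma NPsumm_expand {subs : List (Option Summ)}
    (h1 : subs.any Option.isNone → NearPrefix (subs.map Option.isNone))
    (h2 : ∀ s, some s ∈ subs → NPsumm s) : NPsumm (.expand subs) := by
  intro subs' hocc hany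
  cases hocc with
  | refl => exact h1 hany
  | step s _ hmem hocc' => exact h2 s hmem subs' hocc' hany

lemma NPsumm_entries {subs : List (Option Summ)} (h : NPsumm (.expand subs)) :
    ∀ s, some s ∈ subs → NPsumm s := by
  intro s hmem subs' hocc hany
  exact h subs' (.step _ _ _ hmem hocc) hany

-- boolean pattern of a subs list
lemma pattern_getD {subs : List (Option Summ)} {m : ℕ} (hm : m < subs.length) :
    (subs.map Option.isNone).getD m false = (subs.getD m none).isNone := by
  rw [List.getD_eq_getElem _ _ (by simpa using hm), List.getD_eq_getElem _ _ hm]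
  simp

open Classical in
lemma not_nearPrefix_triple {l : List Bool} (h : ¬ NearPrefix l) :
    ∃ a b1 b2, a < b1 ∧ b1 < b2 ∧ b2 < l.length ∧
      l.getD a false = false ∧ l.getD b1 false = true ∧ l.getD b2 false = true := by
  by_cases hA : ∃ m, m < l.length ∧ l.getD m false = false
  · set a := Nat.find hA with ha
    obtain ⟨hal, haf⟩ := Nat.find_spec hA
    have hmin : ∀ m, m < a → ¬ (m < l.length ∧ l.getD m false = false) :=
      fun m hm => Nat.find_min hA hm
    by_cases htwo : ∃ b1 b2, a < b1 ∧ b1 < b2 ∧ b2 < l.length ∧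
        l.getD b1 false = true ∧ l.getD b2 false = true
    · obtain ⟨b1, b2, h1, h2, h3, h4, h5⟩ := htwo
      exact ⟨a, b1, b2, h1, h2, h3, haf, h4, h5⟩
    · exfalso
      apply h
      by_cases hone : ∃ j, a < j ∧ j < l.length ∧ l.getD j false = true
      · obtain ⟨j, hj1, hj2, hj3⟩ := hone
        right
        refine ⟨a, j, by omega, hj2, fun m hm => ?_⟩
        constructor
        · intro hmt
          by_cases hma : m < a
          · exact Or.inl hma
          · by_cases hmj : m = j
            · exact Or.inr hmj
            · exfalso
              -- m and j are two distinct trues above a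
              have hmgt : a < m := by
                rcases Nat.lt_or_ge a m with h' | h'
                · exact h'
                · have : m = a := by omega
                  subst this
                  rw [List.getD_eq_getElem _ _ hm] at haf
                  rw [haf] at hmt
                  exact absurd hmt (by simp)
              have hmD : l.getD m false = true := by
                rw [List.getD_eq_getElem _ _ hm]; exact hmt
              rcases Nat.lt_or_ge m j with hmj' | hmj'
              · exact htwo ⟨m, j, hmgt, hmj', hj2, hmD, hj3⟩
              · exact htwo ⟨j, m, hj1, by omega, hm, hj3, hmD⟩
        · intro hmor
          rcases hmor with hma | rfl
          · have := hmin m hma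
            push_neg at this
            have h2 := this (by omega)
            rw [List.getD_eq_getElem _ _ hm] at h2
            simpa using h2
          · rw [List.getD_eq_getElem _ _ hm] at hj3
            exact hj3
      · left
        refine ⟨a, fun m hm => ?_⟩
        constructor
        · intro hmt
          by_cases hma : m < a
          · exact hma
          · exfalso
            have hmgt : a < m := by
              rcases Nat.lt_or_ge a m with h' | h'
              · exact h'
              · have : m = a := by omega
                subst this
                rw [List.getD_eq_getElem _ _ hm] at haf
                rw [haf] at hmt
                exact absurd hmt (by simp)
            exact hone ⟨m, hmgt, hm, by rw [List.getD_eq_getElem _ _ hm]; exact hmt⟩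
        · intro hma
          have := hmin m hma
          push_neg at this
          have h2 := this (by omega)
          rw [List.getD_eq_getElem _ _ hm] at h2
          simpa using h2
  · exfalso
    apply h
    left
    refine ⟨l.length, fun m hm => ?_⟩
    push_neg at hA
    have := hA m hm
    rw [List.getD_eq_getElem _ _ hm] at this
    simp only [Bool.not_eq_false] at this
    exact ⟨fun _ => hm, fun _ => this⟩

/-! ### Step A: replacing child summaries by optimal near-prefix ones -/

def ChildOpt (W : ℝ) (cs : List WTree) : Prop :=
  ∀ i, i < cs.length → ∀ m, 1 ≤ m → m ≤ (cs.getD i dT).size →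
    ∃ so, Valid (cs.getD i dT) so ∧ so.count = m ∧
      (∀ s', Valid (cs.getD i dT) s' → s'.count = m →
        listEntropy W (parts (cs.getD i dT) s') ≤ listEntropy W (parts (cs.getD i dT) so)) ∧
      NPsumm so

lemma stepA (W : ℝ) {w : ℝ} {cs : List WTree} {subs : List (Option Summ)}
    (hv : Valid (.node w cs) (.expand subs)) (HCO : ChildOpt W cs) :
    ∃ subs₁ : List (Option Summ), Valid (.node w cs) (.expand subs₁) ∧
      subs₁.length = subs.length ∧
      (Summ.expand subs₁).count = (Summ.expand subs).count ∧
      listEntropy W (parts (.node w cs) (.expand subs))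
        ≤ listEntropy W (parts (.node w cs) (.expand subs₁)) ∧
      (∀ s, some s ∈ subs₁ → NPsumm s) := by
  obtain ⟨hlen, hval⟩ := valid_expand_iff.mp hv
  have H : ∀ i : ℕ, ∃ o : Option Summ,
      (i < subs.length → ((subs.getD i none = none ∧ o = none) ∨
        (∃ si, subs.getD i none = some si ∧ ∃ so, o = some so ∧
          Valid (cs.getD i dT) so ∧ so.count = si.count ∧
          listEntropy W (parts (cs.getD i dT) si)
            ≤ listEntropy W (parts (cs.getD i dT) so) ∧ NPsumm so))) ∧
      (¬ i < subs.length → o = none) := by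
    intro i
    by_cases hi : i < subs.length
    · cases hsi : subs.getD i none with
      | none => exact ⟨none, fun _ => Or.inl ⟨rfl, rfl⟩, fun h => absurd hi h⟩
      | some si =>
        have hvi := hval i hi si hsi
        have hc1 := count_pos si
        have hc2 := count_le_size (sizeOf si) si _ (le_refl _) hvi
        obtain ⟨so, hvso, hcso, hmaxso, hnpso⟩ :=
          HCO i (by omega) si.count hc1 hc2
        exact ⟨some so, fun _ => Or.inr ⟨si, rfl, so, rfl, hvso, hcso,
          hmaxso si hvi rfl, hnpso⟩, fun h => absurd hi h⟩
    · exact ⟨none, fun h => absurd h hi, fun _ => rfl⟩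
  choose F hF using H
  set subs₁ : List (Option Summ) := (List.range subs.length).map F with hsubs₁
  have hlen₁ : subs₁.length = subs.length := by simp [hsubs₁]
  have hget : ∀ j, j < subs.length → subs₁.getD j none = F j := by
    intro j hj
    rw [hsubs₁, List.getD_eq_getElem _ _ (by simpa using hj)]
    simp
  have hpat : ∀ j, j < subs.length →
      (subs₁.getD j none).isNone = (subs.getD j none).isNone := by
    intro j hj
    rw [hget j hj]
    rcases (hF j).1 hj with ⟨h1, h2⟩ | ⟨si, h1, so, h2, _⟩
    · rw [h1, h2]
    · rw [h1, h2]
      rfl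
  have hany : subs₁.any Option.isNone = subs.any Option.isNone := by
    rw [Bool.eq_iff_iff, anyNone_iff, anyNone_iff, hlen₁]
    constructor
    · rintro ⟨j, hj, hjn⟩
      exact ⟨j, hj, by rw [← hpat j hj]; exact hjn⟩
    · rintro ⟨j, hj, hjn⟩
      exact ⟨j, hj, by rw [hpat j hj]; exact hjn⟩
  have how : otherWeight cs subs₁ = otherWeight cs subs := by
    rw [otherWeight_eq cs subs₁ (by omega), otherWeight_eq cs subs hlen, hlen₁]
    apply Finset.sum_congr rfl
    intro j hj
    rw [Finset.mem_range] at hj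
    unfold oweight
    rw [hpat j hj]
  have hcl : Summ.countList subs₁ = Summ.countList subs := by
    rw [countList_eq, countList_eq, hlen₁]
    apply Finset.sum_congr rfl
    intro j hj
    rw [Finset.mem_range] at hj
    rw [hget j hj]
    rcases (hF j).1 hj with ⟨h1, h2⟩ | ⟨si, h1, so, h2, _, hc, _⟩
    · rw [h1, h2]
    · rw [h1, h2]
      simp only [ocount]
      rw [hc]
  have hent : listEntropy W (partsList cs subs)
      ≤ listEntropy W (partsList cs subs₁) := by
    rw [entropy_partsList_eq W cs subs₁ (by omega), entropy_partsList_eq W cs subs hlen,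
      hlen₁]
    apply Finset.sum_le_sum
    intro j hj
    rw [Finset.mem_range] at hj
    rw [hget j hj]
    rcases (hF j).1 hj with ⟨h1, h2⟩ | ⟨si, h1, so, h2, _, _, hle, _⟩
    · rw [h1, h2]
    · rw [h1, h2]
      simpa only [oent] using hle
  refine ⟨subs₁, ?_, hlen₁, ?_, ?_, ?_⟩
  · rw [valid_expand_iff]
    refine ⟨by omega, fun j hj s hs => ?_⟩
    rw [hlen₁] at hj
    rw [hget j hj] at hs
    rcases (hF j).1 hj with ⟨h1, h2⟩ | ⟨si, h1, so, h2, hvso, _⟩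
    · rw [h2] at hs; exact absurd hs (by simp)
    · rw [h2] at hs
      injection hs with h3
      exact h3 ▸ hvso
  · rw [count_expand, count_expand, hany, hcl]
  · rw [entropy_parts_expand, entropy_parts_expand, hany, how]
    split <;> linarith
  · intro s hmem
    obtain ⟨j, hj, hjs⟩ := List.getElem_of_mem hmem
    have hj' : j < subs.length := by
      rw [← hlen₁]; exact hj
    have : subs₁.getD j none = some s := by
      rw [List.getD_eq_getElem _ _ hj, hjs]
    rw [hget j hj'] at this
    rcases (hF j).1 hj' with ⟨h1, h2⟩ | ⟨si, h1, so, h2, _, _, _, hnp⟩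
    · rw [h2] at this; exact absurd this (by simp)
    · rw [h2] at this
      injection this with h3
      exact h3 ▸ hnp

/-! ### The exchange loop at a single node -/

lemma mu_ge_of_none {subs : List (Option Summ)} {j : ℕ} (hj : j < subs.length)
    (hn : subs.getD j none = none) : j ≤ mu subs := by
  unfold mu
  have : j = if (subs.getD j none).isNone then j else 0 := by rw [hn]; rfl
  rw [this]
  exact Finset.single_le_sum
    (f := fun i => if (subs.getD i none).isNone then i else 0)
    (fun i _ => by split <;> omega) (Finset.mem_range.2 hj)

lemma loopFix (W : ℝ) (hW : 0 < W) {w : ℝ} {cs : List WTree}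
    (hnn : NN (.node w cs))
    (hsort : WTree.AllNodes (fun _ cs => (cs.map WTree.wt).Pairwise (· ≤ ·)) (.node w cs))
    (HCO : ChildOpt W cs) :
    ∀ M (subs : List (Option Summ)), mu subs ≤ M →
      Valid (.node w cs) (.expand subs) →
      (∀ s, some s ∈ subs → NPsumm s) →
      ∃ subs₂ : List (Option Summ), Valid (.node w cs) (.expand subs₂) ∧
        (Summ.expand subs₂).count = (Summ.expand subs).count ∧
        listEntropy W (parts (.node w cs) (.expand subs))
          ≤ listEntropy W (parts (.node w cs) (.expand subs₂)) ∧
        NPsumm (.expand subs₂) := by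
  intro M
  induction M with
  | zero =>
    intro subs hmu hv hnps
    by_cases hNP : subs.any Option.isNone → NearPrefix (subs.map Option.isNone)
    · exact ⟨subs, hv, rfl, le_refl _, NPsumm_expand hNP hnps⟩
    · exfalso
      push_neg at hNP
      obtain ⟨hany, hNP'⟩ := hNP
      obtain ⟨a, b1, b2, hab, hbb, hb2, _, hB1, _⟩ := not_nearPrefix_triple hNP'
      rw [List.length_map] at hb2
      rw [pattern_getD (by omega), Option.isNone_iff_eq_none] at hB1
      have := mu_ge_of_none (by omega) hB1
      omega
  | succ M ih =>
    intro subs hmu hv hnps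
    by_cases hNP : subs.any Option.isNone → NearPrefix (subs.map Option.isNone)
    · exact ⟨subs, hv, rfl, le_refl _, NPsumm_expand hNP hnps⟩
    · push_neg at hNP
      obtain ⟨hany, hNP'⟩ := hNP
      obtain ⟨a, b1, b2, hab, hbb, hb2, hA, hB1, hB2⟩ := not_nearPrefix_triple hNP'
      rw [List.length_map] at hb2
      rw [pattern_getD (by omega)] at hA hB1 hB2
      rw [Option.isNone_iff_eq_none] at hB1 hB2
      obtain ⟨hlen, hval⟩ := valid_expand_iff.mp hv
      obtain ⟨sa, hsa⟩ : ∃ sa, subs.getD a none = some sa := by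
        cases hx : subs.getD a none with
        | none => rw [hx] at hA; exact absurd hA (by simp)
        | some sa => exact ⟨sa, rfl⟩
      have hva := hval a (by omega) sa hsa
      have hnna := allNodes_child (i := a) hnn (by omega)
      -- weights
      have hwa0 : 0 ≤ (cs.getD a dT).wt := wt_nonneg _ hnna
      have hwb10 : 0 ≤ (cs.getD b1 dT).wt :=
        wt_nonneg _ (allNodes_child (i := b1) hnn (by omega))
      have hsab : (cs.getD a dT).wt ≤ (cs.getD b1 dT).wt :=
        child_wt_sorted hsort (by omega) (by omega)
      have hsbb : (cs.getD b1 dT).wt ≤ (cs.getD b2 dT).wt :=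
        child_wt_sorted hsort (by omega) (by omega)
      have hgpair : (cs.getD b1 dT).wt + (cs.getD b2 dT).wt ≤ otherWeight cs subs :=
        otherWeight_ge_pair hnn hlen (by omega) (by omega) (by omega) hB1 hB2
      have hgsingle : (cs.getD b1 dT).wt ≤ otherWeight cs subs :=
        otherWeight_ge_single hnn hlen (by omega) hB1
      by_cases hca : sa.count = 1
      · -- swap: a goes into the group, b1 comes out collapsed
        set subsA : List (Option Summ) := subs.set a none with hsubsA
        have hlenA : subsA.length = subs.length := by rw [hsubsA, List.length_set]
        have hgA1 : subsA.getD b1 none = none := by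
          rw [hsubsA, getD_set_ne _ (by omega)]; exact hB1
        have hgA2 : subsA.getD b2 none = none := by
          rw [hsubsA, getD_set_ne _ (by omega)]; exact hB2
        have hvA : Valid (.node w cs) (.expand subsA) :=
          set_valid (cs := cs) _ hv (fun s hs => by simp at hs)
        set subs₂ : List (Option Summ) := subsA.set b1 (some .leafAll) with hsubs₂
        have hlen₂ : subs₂.length = subs.length := by
          rw [hsubs₂, List.length_set, hlenA]
        have hv₂ : Valid (.node w cs) (.expand subs₂) :=
          set_valid (cs := cs) _ hvA
            (fun s hs => by injection hs with h; exact h ▸ Valid.all _)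
        have hanyA : subsA.any Option.isNone = true :=
          anyNone_of_getD (j := b2) (by omega) hgA2
        have hany₂ : subs₂.any Option.isNone = true := by
          apply anyNone_of_getD (j := b2) (by rw [hlen₂]; omega)
          rw [hsubs₂, getD_set_ne _ (by omega)]
          exact hgA2
        -- counts
        have hclA := set_countList (subs := subs) (i := a) none (by omega)
        rw [hsa] at hclA
        simp only [ocount] at hclA
        have hcl₂ := set_countList (subs := subsA) (i := b1) (some .leafAll) (by omega)
        rw [hgA1] at hcl₂
        simp only [ocount, Summ.count] at hcl₂
        rw [← hsubsA] at hclA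
        rw [← hsubs₂] at hcl₂
        have hcount : (Summ.expand subs₂).count = (Summ.expand subs).count := by
          rw [count_expand, count_expand, if_pos hany₂, if_pos hany]
          omega
        -- otherWeight
        have howA := set_otherWeight (cs := cs) (subs := subs) (i := a) none hlen (by omega)
        rw [oweight_some (by rw [hsa]; simp), oweight_none rfl, ← hsubsA] at howA
        have how₂ := set_otherWeight (cs := cs) (subs := subsA) (i := b1)
          (some .leafAll) (by rw [hlenA, ← hlen]) (by omega)
        rw [oweight_none hgA1, oweight_some (by simp), ← hsubs₂] at how₂
        -- entropies
        have hentA := set_entropy (cs := cs) (subs := subs) (i := a) none W hlen (by omega)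
        rw [hsa, ← hsubsA] at hentA
        simp only [oent] at hentA
        rw [valid_count_one_parts hva hca, listEntropy_singleton] at hentA
        have hent₂ := set_entropy (cs := cs) (subs := subsA) (i := b1)
          (some .leafAll) W (by rw [hlenA, ← hlen]) (by omega)
        rw [hgA1, ← hsubs₂] at hent₂
        simp only [oent, parts_leafAll, listEntropy_singleton] at hent₂
        have hmaj := phi_majorize hW hwa0 hsab hgsingle
        have hentropy : listEntropy W (parts (.node w cs) (.expand subs))
            ≤ listEntropy W (parts (.node w cs) (.expand subs₂)) := by
          rw [entropy_parts_expand, entropy_parts_expand, if_pos hany₂, if_pos hany]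
          have hg₂ : otherWeight cs subs₂
              = otherWeight cs subs + (cs.getD a dT).wt - (cs.getD b1 dT).wt := by
            linarith
          rw [hg₂]
          linarith
        -- mu decreases
        have hmuA := set_mu (subs := subs) (i := a) none (by omega)
        rw [hsa, ← hsubsA] at hmuA
        simp at hmuA
        have hmu₂ := set_mu (subs := subsA) (i := b1) (some .leafAll) (by omega)
        rw [hgA1, ← hsubs₂] at hmu₂
        simp at hmu₂
        -- child summaries are still near-prefix
        have hnps₂ : ∀ s, some s ∈ subs₂ → NPsumm s := by
          intro s hmem
          obtain ⟨j, hj, hjs⟩ := List.getElem_of_mem hmem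
          have hj' : j < subs.length := by rw [← hlen₂]; exact hj
          have hgd : subs₂.getD j none = some s := by
            rw [List.getD_eq_getElem _ _ hj, hjs]
          by_cases hjb1 : b1 = j
          · subst hjb1
            rw [hsubs₂, getD_set_self _ (by omega)] at hgd
            injection hgd with h
            exact h ▸ NPsumm_leafAll
          · rw [hsubs₂, getD_set_ne _ hjb1] at hgd
            by_cases hja : a = j
            · subst hja
              rw [hsubsA, getD_set_self _ (by omega)] at hgd
              exact absurd hgd (by simp)
            · rw [hsubsA, getD_set_ne _ hja] at hgd
              exact hnps s (getD_some_mem hj' hgd)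
        obtain ⟨subs₃, hv₃, hc₃, he₃, hnp₃⟩ := ih subs₂ (by omega) hv₂ hnps₂
        exact ⟨subs₃, hv₃, by rw [hc₃, hcount], le_trans hentropy he₃, hnp₃⟩
      · -- a keeps a (coarsened, re-optimized) summary; b1 comes out collapsed
        have hca2 : 2 ≤ sa.count := by
          have := count_pos sa; omega
        obtain ⟨sa', hva', hca', hea'⟩ := coarsen_step W hW (sizeOf sa) sa _
          (le_refl _) hva hnna hca2
        have hcsize := count_le_size (sizeOf sa) sa _ (le_refl _) hva
        obtain ⟨saN, hvN, hcN, hmaxN, hnpN⟩ := HCO a (by omega) sa'.count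
          (count_pos sa') (by omega)
        have heN : listEntropy W (parts (cs.getD a dT) sa')
            ≤ listEntropy W (parts (cs.getD a dT) saN) := hmaxN sa' hva' rfl
        set subsA : List (Option Summ) := subs.set a (some saN) with hsubsA
        have hlenA : subsA.length = subs.length := by rw [hsubsA, List.length_set]
        have hgA1 : subsA.getD b1 none = none := by
          rw [hsubsA, getD_set_ne _ (by omega)]; exact hB1
        have hgA2 : subsA.getD b2 none = none := by
          rw [hsubsA, getD_set_ne _ (by omega)]; exact hB2
        have hvA : Valid (.node w cs) (.expand subsA) :=
          set_valid (cs := cs) _ hv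
            (fun s hs => by injection hs with h; exact h ▸ hvN)
        set subs₂ : List (Option Summ) := subsA.set b1 (some .leafAll) with hsubs₂
        have hlen₂ : subs₂.length = subs.length := by
          rw [hsubs₂, List.length_set, hlenA]
        have hv₂ : Valid (.node w cs) (.expand subs₂) :=
          set_valid (cs := cs) _ hvA
            (fun s hs => by injection hs with h; exact h ▸ Valid.all _)
        have hany₂ : subs₂.any Option.isNone = true := by
          apply anyNone_of_getD (j := b2) (by rw [hlen₂]; omega)
          rw [hsubs₂, getD_set_ne _ (by omega)]
          exact hgA2
        -- counts
        have hclA := set_countList (subs := subs) (i := a) (some saN) (by omega)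
        rw [hsa] at hclA
        simp only [ocount] at hclA
        have hcl₂ := set_countList (subs := subsA) (i := b1) (some .leafAll) (by omega)
        rw [hgA1] at hcl₂
        simp only [ocount, Summ.count] at hcl₂
        rw [← hsubsA] at hclA
        rw [← hsubs₂] at hcl₂
        have hanyA : subsA.any Option.isNone = subs.any Option.isNone :=
          set_anyNone_eq _ (by omega) (by rw [hsa]; rfl)
        have hcount : (Summ.expand subs₂).count = (Summ.expand subs).count := by
          rw [count_expand, count_expand, if_pos hany₂, if_pos hany]
          omega
        -- otherWeight
        have howA := set_otherWeight (cs := cs) (subs := subs) (i := a)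
          (some saN) hlen (by omega)
        rw [oweight_some (by rw [hsa]; simp), oweight_some (by simp), ← hsubsA] at howA
        have how₂ := set_otherWeight (cs := cs) (subs := subsA) (i := b1)
          (some .leafAll) (by rw [hlenA, ← hlen]) (by omega)
        rw [oweight_none hgA1, oweight_some (by simp), ← hsubs₂] at how₂
        -- entropies
        have hentA := set_entropy (cs := cs) (subs := subs) (i := a) (some saN) W hlen (by omega)
        rw [hsa, ← hsubsA] at hentA
        simp only [oent] at hentA
        have hent₂ := set_entropy (cs := cs) (subs := subsA) (i := b1)
          (some .leafAll) W (by rw [hlenA, ← hlen]) (by omega)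
        rw [hgA1, ← hsubs₂] at hent₂
        simp only [oent, parts_leafAll, listEntropy_singleton] at hent₂
        have hsplit := phi_split_ge hW hwb10 (g := otherWeight cs subs) (by linarith)
        have hdiva : (cs.getD a dT).wt / W ≤ (cs.getD b1 dT).wt / W :=
          div_le_div_of_nonneg_right hsab hW.le
        have hentropy : listEntropy W (parts (.node w cs) (.expand subs))
            ≤ listEntropy W (parts (.node w cs) (.expand subs₂)) := by
          rw [entropy_parts_expand, entropy_parts_expand, if_pos hany₂, if_pos hany]
          have hg₂ : otherWeight cs subs₂
              = otherWeight cs subs - (cs.getD b1 dT).wt := by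
            linarith
          rw [hg₂]
          linarith
        -- mu decreases
        have hmuA := set_mu (subs := subs) (i := a) (some saN) (by omega)
        rw [hsa, ← hsubsA] at hmuA
        simp at hmuA
        have hmu₂ := set_mu (subs := subsA) (i := b1) (some .leafAll) (by omega)
        rw [hgA1, ← hsubs₂] at hmu₂
        simp at hmu₂
        have hnps₂ : ∀ s, some s ∈ subs₂ → NPsumm s := by
          intro s hmem
          obtain ⟨j, hj, hjs⟩ := List.getElem_of_mem hmem
          have hj' : j < subs.length := by rw [← hlen₂]; exact hj
          have hgd : subs₂.getD j none = some s := by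
            rw [List.getD_eq_getElem _ _ hj, hjs]
          by_cases hjb1 : b1 = j
          · subst hjb1
            rw [hsubs₂, getD_set_self _ (by omega)] at hgd
            injection hgd with h
            exact h ▸ NPsumm_leafAll
          · rw [hsubs₂, getD_set_ne _ hjb1] at hgd
            by_cases hja : a = j
            · subst hja
              rw [hsubsA, getD_set_self _ (by omega)] at hgd
              injection hgd with h
              exact h ▸ hnpN
            · rw [hsubsA, getD_set_ne _ hja] at hgd
              exact hnps s (getD_some_mem hj' hgd)
        obtain ⟨subs₃, hv₃, hc₃, he₃, hnp₃⟩ := ih subs₂ (by omega) hv₂ hnps₂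
        exact ⟨subs₃, hv₃, by rw [hc₃, hcount], le_trans hentropy he₃, hnp₃⟩

/-! ### Main lemma -/

lemma main_lemma (W : ℝ) (hW : 0 < W) : ∀ N (t : WTree), t.size ≤ N → NN t →
    WTree.AllNodes (fun _ cs => (cs.map WTree.wt).Pairwise (· ≤ ·)) t →
    ∀ k, 1 ≤ k → k ≤ t.size →
    ∃ s : Summ, Valid t s ∧ s.count = k ∧
      (∀ s', Valid t s' → s'.count = k →
        listEntropy W (parts t s') ≤ listEntropy W (parts t s)) ∧
      NPsumm s := by
  intro N
  induction N with
  | zero => intro t hsz; have := size_pos t; omega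
  | succ N ih =>
    intro t hsz hnn hsort k hk1 hkn
    cases t with | node w cs =>
    have HCO : ChildOpt W cs := by
      intro i hi m h1 h2
      have hszc : (cs.getD i dT).size ≤ N := by
        have h3 := child_size_le hi
        rw [WTree.size] at hsz
        omega
      exact ih (cs.getD i dT) hszc (allNodes_child hnn hi) (allNodes_child hsort hi)
        m h1 h2
    obtain ⟨s₀, hv₀, hc₀, hmax₀⟩ := exists_maximizer W _ hnn k hk1 hkn
    cases s₀ with
    | leafAll =>
      exact ⟨.leafAll, hv₀, hc₀, hmax₀, NPsumm_leafAll⟩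
    | expand subs =>
      obtain ⟨subs₁, hv₁, _, hc₁, he₁, hnp₁⟩ := stepA W hv₀ HCO
      obtain ⟨subs₂, hv₂, hc₂, he₂, hnp₂⟩ := loopFix W hW hnn hsort HCO
        (mu subs₁) subs₁ (le_refl _) hv₁ hnp₁
      exact ⟨.expand subs₂, hv₂, by omega, fun s' hv' hc' =>
        le_trans (hmax₀ s' hv' hc') (le_trans he₁ he₂), hnp₂⟩

/-- Structural theorem: for every 1 ≤ k ≤ n there is a maximum entropy k-node summary
tree in which every group node `other_v` is a prefix or near-prefix of the children of
`v` sorted in nondecreasing order by subtree weight. -/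
theorem structural_theorem (t : WTree)
    (hnn : WTree.AllNodes (fun w _ => 0 ≤ w) t)
    (hsorted : WTree.AllNodes (fun _ cs => (cs.map WTree.wt).Pairwise (· ≤ ·)) t)
    (hWpos : 0 < WTree.wt t)
    (k : ℕ) (hk1 : 1 ≤ k) (hkn : k ≤ WTree.size t) :
    ∃ s : Summ, Valid t s ∧ Summ.count s = k ∧
      (∀ s' : Summ, Valid t s' → Summ.count s' = k →
        listEntropy (WTree.wt t) (parts t s') ≤ listEntropy (WTree.wt t) (parts t s)) ∧
      (∀ subs : List (Option Summ), Occurs (.expand subs) s →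
        subs.any Option.isNone → NearPrefix (subs.map Option.isNone)) := by
  obtain ⟨s, hv, hc, hmax, hnp⟩ := main_lemma (WTree.wt t) hWpos (WTree.size t) t
    (le_refl _) hnn hsorted k hk1 hkn
  exact ⟨s, hv, hc, hmax, fun subs hocc hany => hnp subs hocc hany⟩
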